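/- arXiv:2311.15699 — 5 statements merged into one kernel-verified Lean document; each statement's English description precedes it below -/
import Mathlib

section
/- Let y = (y_1, ..., y_n) be a vector of n positive integer car lengths and let y⁺ = (y_1, ..., y_n, y_{n+1}) be any extension of y by one additional positive integer. If χ(y) = α, then χ(y⁺) ∈ {α, α+1}. -/
/-- Car with preference `pref` and length `len` fits at spot `s`:
`pref ≤ s`, the spots `s, s+1, ..., s+len-1` all lie in the lot `[1, m]`,
and none of them is occupied. -/
def FitsAt (occ : Finset ℕ) (m pref len s : ℕ) : Prop :=
  pref ≤ s ∧ s + len ≤ m + 1 ∧ ∀ t ∈ Finset.Ico s (s + len), t ∉ occ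

/-- The car parks at `s`: `s` is the least spot (≥ its preference) where it fits. -/
def ParksAt (occ : Finset ℕ) (m pref len s : ℕ) : Prop :=
  FitsAt occ m pref len s ∧ ∀ s' < s, ¬ FitsAt occ m pref len s'

/-- Every car in the list of (preference, length) pairs can park, with
cars entering in order, starting from the set `occ` of occupied spots. -/
inductive Park (m : ℕ) : Finset ℕ → List (ℕ × ℕ) → Prop
  | nil (occ : Finset ℕ) : Park m occ []
  | cons (occ : Finset ℕ) (pref len : ℕ) (rest : List (ℕ × ℕ)) (s : ℕ) :
      ParksAt occ m pref len s →
      Park m (occ ∪ Finset.Ico s (s + len)) rest →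
      Park m occ ((pref, len) :: rest)

/-- `x` is a parking assortment for the length vector `y`. -/
def PA (y x : List ℕ) : Prop :=
  x.length = y.length ∧ (∀ v ∈ x, 1 ≤ v ∧ v ≤ y.sum) ∧ Park y.sum ∅ (x.zip y)

/-- `x` is a (permutation) invariant parking assortment for `y`. -/
def PAinv (y x : List ℕ) : Prop :=
  ∀ x' : List ℕ, x.Perm x' → PA y x'

/-- The degree of `x`: the number of entries of `x` different from 1. -/
def deg (x : List ℕ) : ℕ := (x.filter (fun v => v ≠ 1)).length

/-- The characteristic of `y`: the greatest degree over all invariant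
parking assortments for `y`. -/
noncomputable def chi (y : List ℕ) : ℕ := sSup {d | ∃ x, PAinv y x ∧ deg x = d}

/-- The invariant solution set of `y`. -/
def Wset (y : List ℕ) : Set ℕ :=
  {w | PAinv y (List.replicate (y.length - 1) 1 ++ [w])}
/-- Parking with explicit final state. -/
inductive ParkTo (m : ℕ) : Finset ℕ → List (ℕ × ℕ) → Finset ℕ → Prop
  | nil (occ : Finset ℕ) : ParkTo m occ [] occ
  | cons (occ : Finset ℕ) (pref len : ℕ) (rest : List (ℕ × ℕ)) (s : ℕ) (F : Finset ℕ) :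
      ParksAt occ m pref len s →
      ParkTo m (occ ∪ Finset.Ico s (s + len)) rest F →
      ParkTo m occ ((pref, len) :: rest) F

lemma parksAt_unique {occ m p l s s'} (h : ParksAt occ m p l s) (h' : ParksAt occ m p l s') :
    s = s' := by
  rcases lt_trichotomy s s' with hl | he | hg
  · exact absurd h.1 (h'.2 s hl)
  · exact he
  · exact absurd h'.1 (h.2 s' hg)

lemma park_iff_parkTo {m occ l} : Park m occ l ↔ ∃ F, ParkTo m occ l F := by
  constructor
  · intro h
    induction h with
    | nil occ => exact ⟨occ, ParkTo.nil occ⟩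
    | cons occ p len rest s hp _ ih =>
      obtain ⟨F, hF⟩ := ih
      exact ⟨F, ParkTo.cons occ p len rest s F hp hF⟩
  · rintro ⟨F, h⟩
    induction h with
    | nil occ => exact Park.nil occ
    | cons occ p len rest s F hp _ ih => exact Park.cons occ p len rest s hp ih

lemma parkTo_subset {m occ l F} (h : ParkTo m occ l F) : occ ⊆ F := by
  induction h with
  | nil occ => exact Finset.Subset.refl occ
  | cons occ p len rest s F hp _ ih => exact (Finset.subset_union_left).trans ih

lemma park_cons_elim {m occ p l r} (h : Park m occ ((p, l) :: r)) :
    ∃ s, ParksAt occ m p l s ∧ Park m (occ ∪ Finset.Ico s (s + l)) r := by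
  cases h with
  | cons _ _ _ _ s hp hr => exact ⟨s, hp, hr⟩

lemma parkTo_append {m occ F} {a b : List (ℕ × ℕ)} :
    ParkTo m occ (a ++ b) F ↔ ∃ G, ParkTo m occ a G ∧ ParkTo m G b F := by
  induction a generalizing occ with
  | nil =>
    simp only [List.nil_append]
    constructor
    · intro h; exact ⟨occ, ParkTo.nil occ, h⟩
    · rintro ⟨G, hG, hF⟩; cases hG; exact hF
  | cons hd tl ih =>
    obtain ⟨p, l⟩ := hd
    constructor
    · intro h
      cases h with
      | cons _ _ _ _ s F hp hrest =>
        obtain ⟨G, h1, h2⟩ := ih.mp hrest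
        exact ⟨G, ParkTo.cons _ p l tl s G hp h1, h2⟩
    · rintro ⟨G, hG, hF⟩
      cases hG with
      | cons _ _ _ _ s _ hp hrest =>
        exact ParkTo.cons _ p l (tl ++ b) s F hp (ih.mpr ⟨G, hrest, hF⟩)

lemma fitsAt_lot_mono {occ m m' p l s} (h : FitsAt occ m p l s) (hm : m ≤ m') :
    FitsAt occ m' p l s :=
  ⟨h.1, h.2.1.trans (by omega), h.2.2⟩

lemma parksAt_lot_mono {occ m m' p l s} (h : ParksAt occ m p l s) (hm : m ≤ m') :
    ParksAt occ m' p l s := by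
  refine ⟨fitsAt_lot_mono h.1 hm, fun s' hs' hf => h.2 s' hs' ?_⟩
  exact ⟨hf.1, by have := h.1.2.1; omega, hf.2.2⟩

lemma parkTo_lot_mono {m m' occ l F} (h : ParkTo m occ l F) (hm : m ≤ m') :
    ParkTo m' occ l F := by
  induction h with
  | nil occ => exact ParkTo.nil occ
  | cons occ p len rest s F hp _ ih =>
    exact ParkTo.cons occ p len rest s F (parksAt_lot_mono hp hm) ih

/-- Downgrade the lot size when everything parks within `[1, m]`. -/
lemma parkTo_lot_down {m' m occ l F} (h : ParkTo m' occ l F) (hm : m ≤ m')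
    (hF : ∀ t ∈ F, t ≤ m) (hlen : ∀ pl ∈ l, 1 ≤ pl.2) : ParkTo m occ l F := by
  induction h with
  | nil occ => exact ParkTo.nil occ
  | cons occ p len rest s F hp hrest ih =>
    have hlen1 : 1 ≤ len := hlen (p, len) (List.mem_cons_self)
    have hblock : s + len ≤ m + 1 := by
      have hmem : s + len - 1 ∈ Finset.Ico s (s + len) := by
        simp only [Finset.mem_Ico]; omega
      have : s + len - 1 ∈ F := (parkTo_subset hrest) (Finset.mem_union_right _ hmem)
      have := hF _ this; omega
    refine ParkTo.cons occ p len rest s F ⟨⟨hp.1.1, hblock, hp.1.2.2⟩, ?_⟩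
      (ih hF (fun pl hpl => hlen pl (List.mem_cons_of_mem _ hpl)))
    intro s' hs' hf
    exact hp.2 s' hs' (fitsAt_lot_mono hf hm)

/-- Final state is contained in the lot and has the expected cardinality. -/
lemma parkTo_card {m occ l F} (h : ParkTo m occ l F) :
    occ ⊆ Finset.Icc 1 m → (∀ pl ∈ l, 1 ≤ pl.1) →
    F ⊆ Finset.Icc 1 m ∧ F.card = occ.card + (l.map Prod.snd).sum := by
  induction h with
  | nil occ => exact fun hocc _ => ⟨hocc, by simp⟩
  | cons occ p len rest s F hp hrest ih =>
    intro hocc hpref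
    have hp1 : 1 ≤ p := hpref (p, len) (List.mem_cons_self)
    have hblock : Finset.Ico s (s + len) ⊆ Finset.Icc 1 m := by
      intro t ht
      simp only [Finset.mem_Ico] at ht
      simp only [Finset.mem_Icc]
      have := hp.1.1; have := hp.1.2.1
      omega
    have hdisj : Disjoint occ (Finset.Ico s (s + len)) := by
      rw [Finset.disjoint_right]
      intro t ht
      exact hp.1.2.2 t ht
    have hocc' : occ ∪ Finset.Ico s (s + len) ⊆ Finset.Icc 1 m :=
      Finset.union_subset hocc hblock
    obtain ⟨h1, h2⟩ := ih hocc' (fun pl hpl => hpref pl (List.mem_cons_of_mem _ hpl))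
    refine ⟨h1, ?_⟩
    rw [h2, Finset.card_union_of_disjoint hdisj, Nat.card_Ico]
    simp only [List.map_cons, List.sum_cons]
    omega

/-- Every newly occupied spot is at least some car's preference. -/
lemma parkTo_cover {m occ l F} (h : ParkTo m occ l F) :
    ∀ t ∈ F, t ∉ occ → ∃ pl ∈ l, pl.1 ≤ t := by
  induction h with
  | nil occ => intro t ht hnt; exact absurd ht hnt
  | cons occ p len rest s F hp hrest ih =>
    intro t ht hnt
    by_cases hb : t ∈ occ ∪ Finset.Ico s (s + len)
    · rcases Finset.mem_union.mp hb with h1 | h2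
      · exact absurd h1 hnt
      · refine ⟨(p, len), List.mem_cons_self, ?_⟩
        simp only [Finset.mem_Ico] at h2
        have := hp.1.1; omega
    · obtain ⟨pl, hpl, hle⟩ := ih t ht hb
      exact ⟨pl, List.mem_cons_of_mem _ hpl, hle⟩

/-- Each car's preference is at most `m` (when lengths are positive). -/
lemma parkTo_pref_le {m occ l F} (h : ParkTo m occ l F) : (∀ pl ∈ l, 1 ≤ pl.2) →
    ∀ pl ∈ l, pl.1 ≤ m := by
  induction h with
  | nil occ => intro _ pl hpl; exact absurd hpl List.not_mem_nil
  | cons occ p len rest s F hp hrest ih =>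
    intro hlen pl hpl
    rcases List.mem_cons.mp hpl with rfl | hmem
    · have h1 : 1 ≤ len := hlen (p, len) (List.mem_cons_self)
      have := hp.1.1; have := hp.1.2.1
      simp only; omega
    · exact ih (fun q hq => hlen q (List.mem_cons_of_mem _ hq)) pl hmem

/-- Gap lemma: if the final state avoids the interval `[s, s+c)`, all prefs are ≤ s,
and the initial occupancy is left of `s`, then the final state is left of `s`. -/
lemma parkTo_gap {m occ l F s c} (h : ParkTo m occ l F) (hc : 1 ≤ c)
    (hgap : ∀ t ∈ F, ¬ (s ≤ t ∧ t < s + c)) :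
    (∀ pl ∈ l, pl.1 ≤ s) → (∀ pl ∈ l, 1 ≤ pl.2) →
    (∀ t ∈ occ, t < s) → ∀ t ∈ F, t < s := by
  induction h with
  | nil occ => exact fun _ _ hocc t ht => hocc t ht
  | cons occ p len rest s' F hp hrest ih =>
    intro hpref hlen hocc
    have hp1 : p ≤ s := hpref (p, len) (List.mem_cons_self)
    have hl1 : 1 ≤ len := hlen (p, len) (List.mem_cons_self)
    have hBF : Finset.Ico s' (s' + len) ⊆ F :=
      fun t ht => (parkTo_subset hrest) (Finset.mem_union_right _ ht)
    -- the parking position s' is left of s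
    have hs' : s' + len ≤ s := by
      by_contra hcon
      push_neg at hcon
      -- either block contains a point of the gap, or it's entirely right of the gap
      by_cases hcase : s' < s
      · -- then s ∈ block, contradiction with gap-avoidance
        have : s ∈ Finset.Ico s' (s' + len) := by simp only [Finset.mem_Ico]; omega
        exact hgap s (hBF this) ⟨le_refl s, by omega⟩
      · push_neg at hcase
        -- s' ≥ s; since s' ∈ block ⊆ F avoids the gap, s' ≥ s + c
        have hs'mem : s' ∈ Finset.Ico s' (s' + len) := by simp only [Finset.mem_Ico]; omega
        have hs'c : s + c ≤ s' := by
          have := hgap s' (hBF hs'mem); omega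
        -- but then the car fits at s, contradicting minimality
        have hfit : FitsAt occ m p len s := by
          refine ⟨hp1, ?_, ?_⟩
          · have := hp.1.2.1; omega
          · intro t ht
            simp only [Finset.mem_Ico] at ht
            intro htocc
            have := hocc t htocc; omega
        exact hp.2 s (by omega) hfit
    refine ih hgap (fun pl hpl => hpref pl (List.mem_cons_of_mem _ hpl))
      (fun pl hpl => hlen pl (List.mem_cons_of_mem _ hpl)) ?_
    intro t ht
    rcases Finset.mem_union.mp ht with h1 | h2
    · exact hocc t h1
    · simp only [Finset.mem_Ico] at h2; omega

/-- All-ones preference list always parks, filling an initial segment. -/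
lemma allones_parkTo (m : ℕ) : ∀ (y' : List ℕ) (k : ℕ), (∀ v ∈ y', 1 ≤ v) →
    k + y'.sum ≤ m →
    ParkTo m (Finset.Icc 1 k) ((List.replicate y'.length 1).zip y') (Finset.Icc 1 (k + y'.sum)) := by
  intro y'
  induction y' with
  | nil => intro k _ _; simpa using ParkTo.nil (Finset.Icc 1 k)
  | cons l tl ih =>
    intro k hpos hsum
    have hl : 1 ≤ l := hpos l (List.mem_cons_self)
    simp only [List.length_cons, List.replicate_succ, List.zip_cons_cons, List.sum_cons] at *
    have hpark : ParksAt (Finset.Icc 1 k) m 1 l (k + 1) := by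
      constructor
      · refine ⟨by omega, by omega, ?_⟩
        intro t ht
        simp only [Finset.mem_Ico] at ht
        simp only [Finset.mem_Icc]; omega
      · intro s' hs' hfit
        rcases Nat.eq_zero_or_pos s' with rfl | hpos'
        · exact absurd hfit.1 (by omega)
        · have : s' ∈ Finset.Ico s' (s' + l) := by simp only [Finset.mem_Ico]; omega
          exact hfit.2.2 s' this (by simp only [Finset.mem_Icc]; omega)
    have hunion : Finset.Icc 1 k ∪ Finset.Ico (k+1) (k+1+l) = Finset.Icc 1 (k + l) := by
      ext t
      simp only [Finset.mem_union, Finset.mem_Icc, Finset.mem_Ico]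
      omega
    have := ih (k + l) (fun v hv => hpos v (List.mem_cons_of_mem _ hv)) (by omega)
    refine ParkTo.cons _ 1 l _ (k+1) _ hpark ?_
    rw [hunion]
    rw [← Nat.add_assoc]
    exact this

lemma multiset_exists_min {P : Multiset ℕ} (h : P ≠ 0) : ∃ mn ∈ P, ∀ p ∈ P, mn ≤ p := by
  induction P using Multiset.induction_on with
  | empty => exact absurd rfl h
  | cons a T ih =>
    rcases eq_or_ne T 0 with rfl | hT
    · refine ⟨a, Multiset.mem_cons_self a 0, ?_⟩
      intro p hp
      rcases Multiset.mem_cons.mp hp with rfl | h0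
      · exact le_refl _
      · exact absurd h0 (by simp)
    · obtain ⟨mn, hmem, hmin⟩ := ih hT
      refine ⟨min a mn, ?_, ?_⟩
      · rcases le_total a mn with hle | hle
        · simp [min_eq_left hle]
        · rw [min_eq_right hle]; exact Multiset.mem_cons_of_mem hmem
      · intro p hp
        rcases Multiset.mem_cons.mp hp with rfl | h0
        · exact min_le_left _ _
        · exact le_trans (min_le_right _ _) (hmin p h0)

lemma mem_erase_swap {P : Multiset ℕ} {a b : ℕ} (ha : a ∈ P.erase b) (hb : b ∈ P) :
    b ∈ P.erase a := by
  by_cases hab : a = b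
  · subst hab
    have h1 : 0 < (P.erase a).count a := Multiset.count_pos.mpr ha
    rw [Multiset.count_erase_self] at h1
    rw [← Multiset.count_pos, Multiset.count_erase_self]
    omega
  · exact (Multiset.mem_erase_of_ne (Ne.symm hab)).mpr hb

lemma erase_cons_identity {P : Multiset ℕ} {q v w : ℕ} (hq : q ∈ P.erase w) :
    (v ::ₘ P.erase w).erase q = v ::ₘ ((P.erase q).erase w) := by
  rw [Multiset.erase_comm]
  by_cases hqv : q = v
  · subst hqv
    rw [Multiset.erase_cons_head]
    exact (Multiset.cons_erase hq).symm
  · exact Multiset.erase_cons_tail _ (Ne.symm hqv) ▸ rfl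

/-- THE KEY LEMMA (SWAP): if every arrangement of the preference multiset `P` parks
from `O` (exact fill), then so does every arrangement obtained by replacing an
element `w` of `P` by a value `v` that is a lower bound for `P`. -/
lemma swap_lemma : ∀ (L : List ℕ) (P : Multiset ℕ) (O : Finset ℕ) (M : ℕ),
    Multiset.card P = L.length →
    (∀ p ∈ P, 1 ≤ p) → (∀ l ∈ L, 1 ≤ l) → O ⊆ Finset.Icc 1 M → O.card + L.sum = M →
    (∀ u : List ℕ, (↑u : Multiset ℕ) = P → Park M O (u.zip L)) →
    ∀ w v, w ∈ P → 1 ≤ v → (∀ p ∈ P, v ≤ p) →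
    ∀ u : List ℕ, (↑u : Multiset ℕ) = v ::ₘ P.erase w → Park M O (u.zip L) := by
  intro L
  induction L with
  | nil =>
    intro P O M hcard _ _ _ _ _ w v hw _ _ u hu
    rw [List.length_nil, Multiset.card_eq_zero] at hcard
    subst hcard
    exact absurd hw (by simp)
  | cons l L' ih =>
    intro P O M hcard hppos hlpos hOsub hOcard hAP w v hw hv1 hvmin u hu
    have hcard' : Multiset.card P = L'.length + 1 := by
      simpa using hcard
    obtain ⟨q, u', rfl⟩ : ∃ q u', u = q :: u' := by
      cases u with
      | nil =>
        exfalso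
        have : Multiset.card ((↑([] : List ℕ)) : Multiset ℕ)
            = Multiset.card (v ::ₘ P.erase w) := by rw [hu]
        simp only [Multiset.coe_card, List.length_nil, Multiset.card_cons,
          Multiset.card_erase_of_mem hw] at this
        have hP1 : 0 < Multiset.card P := Multiset.card_pos_iff_exists_mem.mpr ⟨w, hw⟩
        omega
      | cons a b => exact ⟨a, b, rfl⟩
    have hl1 : 1 ≤ l := hlpos l (List.mem_cons_self)
    have huu : (q ::ₘ ↑u' : Multiset ℕ) = v ::ₘ P.erase w := by
      rw [Multiset.cons_coe, hu]
    -- helper: park first car with preference p0 ∈ P, get state + induction data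
    by_cases hqcase : q ∈ P.erase w
    · -- Case (a): q comes from P.erase w
      have hqP : q ∈ P := Multiset.mem_of_mem_erase hqcase
      obtain ⟨s, hs, _⟩ := park_cons_elim (show Park M O (((q :: (P.erase q).toList).zip (l :: L'))) from by
        apply hAP
        rw [← Multiset.cons_coe, Multiset.coe_toList]
        exact Multiset.cons_erase hqP)
      have hAP' : ∀ a : List ℕ, (↑a : Multiset ℕ) = P.erase q →
          Park M (O ∪ Finset.Ico s (s + l)) (a.zip L') := by
        intro a ha
        have hqa : Park M O ((q :: a).zip (l :: L')) := by
          apply hAP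
          rw [← Multiset.cons_coe, ha]
          exact Multiset.cons_erase hqP
        obtain ⟨s2, hs2, hrest2⟩ := park_cons_elim (by simpa using hqa)
        rwa [parksAt_unique hs2 hs] at hrest2
      have hdisj : Disjoint O (Finset.Ico s (s + l)) := by
        rw [Finset.disjoint_right]; intro t ht; exact hs.1.2.2 t ht
      have hblock : Finset.Ico s (s + l) ⊆ Finset.Icc 1 M := by
        intro t ht
        simp only [Finset.mem_Ico] at ht
        simp only [Finset.mem_Icc]
        have h1 := hs.1.1
        have h2 := hs.1.2.1
        have hq1 : 1 ≤ q := hppos q hqP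
        omega
      have hrec := ih (P.erase q) (O ∪ Finset.Ico s (s + l)) M
        (by rw [Multiset.card_erase_of_mem hqP, hcard']; rfl)
        (fun p hp => hppos p (Multiset.mem_of_mem_erase hp))
        (fun l2 hl2 => hlpos l2 (List.mem_cons_of_mem _ hl2))
        (Finset.union_subset hOsub hblock)
        (by rw [Finset.card_union_of_disjoint hdisj, Nat.card_Ico]
            simp only [List.sum_cons] at hOcard
            omega)
        hAP'
        w v (mem_erase_swap hqcase hw) hv1
        (fun p hp => hvmin p (Multiset.mem_of_mem_erase hp))
        u'
        (by
          have h1 : (↑u' : Multiset ℕ) = (v ::ₘ P.erase w).erase q := by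
            rw [← huu, Multiset.erase_cons_head]
          rw [h1, erase_cons_identity hqcase])
      exact Park.cons O q l _ s hs hrec
    · -- Case (b): q = v (the replaced entry goes first)
      have hqv : q = v := by
        have : q ∈ (v ::ₘ P.erase w) := by rw [← huu]; exact Multiset.mem_cons_self _ _
        rcases Multiset.mem_cons.mp this with h1 | h2
        · exact h1
        · exact absurd h2 hqcase
      subst hqv
      have hu' : (↑u' : Multiset ℕ) = P.erase w := by
        have : ((q ::ₘ ↑u' : Multiset ℕ)).erase q = (q ::ₘ P.erase w).erase q := by
          rw [huu]
        simpa [Multiset.erase_cons_head] using this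
      -- find the minimum mn of P
      have hPne : P ≠ 0 := by
        intro h0; rw [h0] at hw; exact absurd hw (by simp)
      obtain ⟨mn, hmn, hmnmin⟩ := multiset_exists_min hPne
      -- park a car with preference mn first
      obtain ⟨r, hr, _⟩ := park_cons_elim (show Park M O (((mn :: (P.erase mn).toList).zip (l :: L'))) from by
        apply hAP
        rw [← Multiset.cons_coe, Multiset.coe_toList]
        exact Multiset.cons_erase hmn)
      have hAP'' : ∀ a : List ℕ, (↑a : Multiset ℕ) = P.erase mn →
          Park M (O ∪ Finset.Ico r (r + l)) (a.zip L') := by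
        intro a ha
        have hqa : Park M O ((mn :: a).zip (l :: L')) := by
          apply hAP
          rw [← Multiset.cons_coe, ha]
          exact Multiset.cons_erase hmn
        obtain ⟨s2, hs2, hrest2⟩ := park_cons_elim (by simpa using hqa)
        rwa [parksAt_unique hs2 hr] at hrest2
      -- every free spot in the lot is ≥ mn (exact fill!)
      have hfree : ∀ t, 1 ≤ t → t ≤ M → t ∉ O → mn ≤ t := by
        intro t ht1 htM htO
        -- run a full arrangement of P
        have hfull : Park M O ((P.toList).zip (l :: L')) := hAP P.toList (Multiset.coe_toList P)
        obtain ⟨F, hPT⟩ := park_iff_parkTo.mp hfull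
        have hlenP : P.toList.length = (l :: L').length := by
          rw [Multiset.length_toList, hcard']; simp
        have hcardF := parkTo_card hPT hOsub (by
          intro pl hpl
          have : pl.1 ∈ P.toList := by
            have := List.of_mem_zip hpl
            exact this.1
          exact hppos pl.1 (by rwa [← Multiset.mem_toList]))
        have hFcard : F.card = M := by
          rw [hcardF.2]
          rw [List.map_snd_zip (l₁ := P.toList) (l₂ := l :: L') (le_of_eq hlenP.symm)]
          exact hOcard
        have hFeq : F = Finset.Icc 1 M := by
          apply Finset.eq_of_subset_of_card_le hcardF.1
          rw [hFcard, Nat.card_Icc]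
          omega
        have htF : t ∈ F := by rw [hFeq]; simp only [Finset.mem_Icc]; omega
        obtain ⟨pl, hpl, hple⟩ := parkTo_cover hPT t htF htO
        have hp1 : pl.1 ∈ P.toList := (List.of_mem_zip hpl).1
        have : mn ≤ pl.1 := hmnmin pl.1 (by rwa [← Multiset.mem_toList])
        omega
      -- the car with preference v parks at the same spot r
      have hrv : ParksAt O M q l r := by
        refine ⟨⟨le_trans (hvmin mn hmn) hr.1.1, hr.1.2.1, hr.1.2.2⟩, ?_⟩
        intro s' hs' hfit
        have hs'1 : 1 ≤ s' := le_trans hv1 hfit.1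
        have hs'M : s' ≤ M := by have := hfit.2.1; omega
        have hs'O : s' ∉ O := hfit.2.2 s' (by simp only [Finset.mem_Ico]; omega)
        have hmns' : mn ≤ s' := hfree s' hs'1 hs'M hs'O
        exact hr.2 s' hs' ⟨hmns', hfit.2.1, hfit.2.2⟩
      -- now handle u'
      by_cases hwcase : w ∈ P.erase mn
      · have hrec := ih (P.erase mn) (O ∪ Finset.Ico r (r + l)) M
          (by rw [Multiset.card_erase_of_mem hmn, hcard']; rfl)
          (fun p hp => hppos p (Multiset.mem_of_mem_erase hp))
          (fun l2 hl2 => hlpos l2 (List.mem_cons_of_mem _ hl2))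
          (Finset.union_subset hOsub (by
            intro t ht
            simp only [Finset.mem_Ico] at ht
            simp only [Finset.mem_Icc]
            have h1 := hr.1.1
            have h2 := hr.1.2.1
            have hq1 : 1 ≤ mn := hppos mn hmn
            omega))
          (by
            have hdisj : Disjoint O (Finset.Ico r (r + l)) := by
              rw [Finset.disjoint_right]; intro t ht; exact hr.1.2.2 t ht
            rw [Finset.card_union_of_disjoint hdisj, Nat.card_Ico]
            simp only [List.sum_cons] at hOcard
            omega)
          hAP''
          w mn hwcase (hppos mn hmn)
          (fun p hp => hmnmin p (Multiset.mem_of_mem_erase hp))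
          u'
          (by
            rw [hu', Multiset.erase_comm]
            exact (Multiset.cons_erase (mem_erase_swap hwcase hmn)).symm)
        exact Park.cons O q l _ r hrv hrec
      · -- w = mn with multiplicity 1: P.erase w = P.erase mn
        have hPew : P.erase w = P.erase mn := by
          have hwmn : w = mn := by
            by_contra hne
            exact hwcase ((Multiset.mem_erase_of_ne hne).mpr hw)
          rw [hwmn]
        have := hAP'' u' (by rw [hu', hPew])
        exact Park.cons O q l _ r hrv this

lemma multiset_exists_max {P : Multiset ℕ} (h : P ≠ 0) : ∃ w ∈ P, ∀ p ∈ P, p ≤ w := by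
  induction P using Multiset.induction_on with
  | empty => exact absurd rfl h
  | cons a T ih =>
    rcases eq_or_ne T 0 with rfl | hT
    · refine ⟨a, Multiset.mem_cons_self a 0, ?_⟩
      intro p hp
      rcases Multiset.mem_cons.mp hp with rfl | h0
      · exact le_refl _
      · exact absurd h0 (by simp)
    · obtain ⟨w, hmem, hmax⟩ := ih hT
      refine ⟨max a w, ?_, ?_⟩
      · rcases le_total a w with hle | hle
        · rw [max_eq_right hle]; exact Multiset.mem_cons_of_mem hmem
        · simp [max_eq_left hle]
      · intro p hp
        rcases Multiset.mem_cons.mp hp with rfl | h0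
        · exact le_max_left _ _
        · exact le_trans (hmax p h0) (le_max_right _ _)

/-- The all-ones list is an invariant parking assortment. -/
lemma allones_PAinv (y : List ℕ) (hypos : ∀ v ∈ y, 0 < v) (hy : y ≠ []) :
    PAinv y (List.replicate y.length 1) := by
  intro x' hperm
  have hperm' := List.perm_replicate.mp hperm.symm
  subst hperm'
  have hm1 : 1 ≤ y.sum := by
    cases y with
    | nil => exact absurd rfl hy
    | cons a t =>
      have := hypos a (List.mem_cons_self)
      simp only [List.sum_cons]
      omega
  refine ⟨by simp, ?_, ?_⟩
  · intro v hv
    rw [List.eq_of_mem_replicate hv]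
    exact ⟨le_refl 1, hm1⟩
  · have h := allones_parkTo y.sum y 0 (fun v hv => hypos v hv) (by omega)
    rw [park_iff_parkTo]
    refine ⟨Finset.Icc 1 (0 + y.sum), ?_⟩
    have : Finset.Icc 1 0 = (∅ : Finset ℕ) := Finset.Icc_eq_empty (by omega)
    rwa [this] at h

lemma deg_perm {x x' : List ℕ} (h : x.Perm x') : deg x = deg x' :=
  (h.filter _).length_eq

/-- Lower-bound lemma: appending a `1` preserves invariance. -/
lemma lb_lemma {y x : List ℕ} {c : ℕ} (hypos : ∀ v ∈ y, 0 < v) (hy : y ≠ [])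
    (hc : 0 < c) (hinv : PAinv y x) : PAinv (y ++ [c]) (x ++ [1]) := by
  have hPA : PA y x := hinv x (List.Perm.refl x)
  obtain ⟨hlen, hbounds, _⟩ := hPA
  set m := y.sum with hm
  have hm1 : 1 ≤ m := by
    cases y with
    | nil => exact absurd rfl hy
    | cons a t =>
      have := hypos a (List.mem_cons_self)
      simp only [hm, List.sum_cons]
      omega
  have hsum : (y ++ [c]).sum = m + c := by simp [hm]
  intro x'' hperm
  have hlen'' : x''.length = x.length + 1 := by
    have := hperm.length_eq
    simpa using this.symm
  have hx''ne : x'' ≠ [] := by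
    intro h0; rw [h0] at hlen''; simp at hlen''
  -- split off the last element
  obtain ⟨u, q, hsplit⟩ : ∃ u q, u ++ [q] = x'' :=
    ⟨x''.dropLast, x''.getLast hx''ne, List.dropLast_append_getLast hx''ne⟩
  have hulen : u.length = y.length := by
    have := congrArg List.length hsplit
    simp only [List.length_append, List.length_singleton] at this
    omega
  -- multiset bookkeeping
  have hmult : (q ::ₘ (↑u : Multiset ℕ)) = 1 ::ₘ (↑x : Multiset ℕ) := by
    rw [Multiset.cons_coe, Multiset.cons_coe]
    apply Multiset.coe_eq_coe.mpr
    have pmid : (u ++ [q]).Perm (x ++ [1]) := by rw [hsplit]; exact hperm.symm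
    exact ((List.perm_append_singleton q u).symm.trans pmid).trans (List.perm_append_singleton 1 x)
  -- entries of x'' are bounded
  have hbounds'' : ∀ v ∈ x'', 1 ≤ v ∧ v ≤ m + c := by
    intro v hv
    have : v ∈ x ++ [1] := hperm.symm.subset hv
    rcases List.mem_append.mp this with h1 | h2
    · have := hbounds v h1; omega
    · simp only [List.mem_singleton] at h2; omega
  -- u parks in the small lot
  have hupark : Park m ∅ (u.zip y) := by
    by_cases hq1 : q = 1
    · -- u is a permutation of x
      subst hq1
      have hux : (↑u : Multiset ℕ) = ↑x := (Multiset.cons_inj_right 1).mp hmult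
      exact (hinv u (Multiset.coe_eq_coe.mp hux).symm).2.2
    · have hqx : q ∈ (↑x : Multiset ℕ) := by
        have : q ∈ (1 ::ₘ (↑x : Multiset ℕ)) := by rw [← hmult]; exact Multiset.mem_cons_self _ _
        rcases Multiset.mem_cons.mp this with h1 | h2
        · exact absurd h1 hq1
        · exact h2
      have humult : (↑u : Multiset ℕ) = 1 ::ₘ ((↑x : Multiset ℕ).erase q) := by
        have h1 : ((q ::ₘ (↑u : Multiset ℕ))).erase q = ((1 : ℕ) ::ₘ (↑x : Multiset ℕ)).erase q := by
          rw [hmult]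
        rw [Multiset.erase_cons_head] at h1
        rw [h1, Multiset.erase_cons_tail _ (Ne.symm hq1)]
      have hAP : ∀ a : List ℕ, (↑a : Multiset ℕ) = (↑x : Multiset ℕ) → Park m ∅ (a.zip y) := by
        intro a ha
        exact (hinv a (Multiset.coe_eq_coe.mp ha.symm)).2.2
      exact swap_lemma y (↑x) ∅ m
        (by simp [hlen])
        (fun p hp => (hbounds p (by rwa [← Multiset.mem_coe])).1)
        (fun l hl => hypos l hl)
        (by simp)
        (by simp [hm])
        hAP q 1 hqx (le_refl 1)
        (fun p hp => (hbounds p (by rwa [← Multiset.mem_coe])).1)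
        u humult
  -- final occupancy of u is [1, m]
  obtain ⟨F, hPT⟩ := park_iff_parkTo.mp hupark
  have hcardF := parkTo_card hPT (by simp) (by
    intro pl hpl
    have h1 : pl.1 ∈ u := (List.of_mem_zip hpl).1
    have h2 : pl.1 ∈ x'' := by
      rw [← hsplit]; exact List.mem_append_left _ h1
    exact (hbounds'' pl.1 h2).1)
  have hFeq : F = Finset.Icc 1 m := by
    apply Finset.eq_of_subset_of_card_le hcardF.1
    rw [Nat.card_Icc, hcardF.2, List.map_snd_zip (l₁ := u) (l₂ := y) (le_of_eq hulen.symm)]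
    simp [hm]
  -- assemble: park u in the big lot, then the last car
  have hq1m : 1 ≤ q ∧ q ≤ m + c := hbounds'' q (by rw [← hsplit]; exact List.mem_append_right _ (by simp))
  have hqm : q ≤ m := by
    by_cases hq1 : q = 1
    · omega
    · have hqx : q ∈ x := by
        have : q ∈ (1 ::ₘ (↑x : Multiset ℕ)) := by rw [← hmult]; exact Multiset.mem_cons_self _ _
        rcases Multiset.mem_cons.mp this with h1 | h2
        · exact absurd h1 hq1
        · rwa [← Multiset.mem_coe]
      exact (hbounds q hqx).2
  have hlast : ParkTo (m + c) (Finset.Icc 1 m) [(q, c)] (Finset.Icc 1 (m + c)) := by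
    have hpk : ParksAt (Finset.Icc 1 m) (m + c) q c (m + 1) := by
      constructor
      · refine ⟨by omega, by omega, ?_⟩
        intro t ht
        simp only [Finset.mem_Ico] at ht
        simp only [Finset.mem_Icc]
        omega
      · intro s' hs' hfit
        have hq1 : 1 ≤ q := hq1m.1
        have hs'1 : 1 ≤ s' := le_trans hq1 hfit.1
        have : s' ∈ Finset.Ico s' (s' + c) := by simp only [Finset.mem_Ico]; omega
        exact hfit.2.2 s' this (by simp only [Finset.mem_Icc]; omega)
    have hun : Finset.Icc 1 m ∪ Finset.Ico (m+1) (m+1+c) = Finset.Icc 1 (m+c) := by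
      ext t
      simp only [Finset.mem_union, Finset.mem_Icc, Finset.mem_Ico]
      omega
    have := ParkTo.cons (m := m + c) (Finset.Icc 1 m) q c [] (m+1) (Finset.Icc 1 m ∪ Finset.Ico (m+1) (m+1+c)) hpk (ParkTo.nil _)
    rwa [hun] at this
  refine ⟨by simp [hlen'', hlen], by simpa [hsum] using hbounds'', ?_⟩
  rw [hsum, ← hsplit, List.zip_append hulen]
  rw [park_iff_parkTo]
  refine ⟨Finset.Icc 1 (m + c), parkTo_append.mpr ⟨F, ?_, ?_⟩⟩
  · exact parkTo_lot_mono hPT (by omega)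
  · rw [hFeq]; simpa using hlast

/-- Upper-bound lemma: erasing a maximal entry of an invariant assortment for
`y ++ [c]` yields an invariant assortment for `y`. -/
lemma ub_lemma {y x' : List ℕ} {c : ℕ} (hypos : ∀ v ∈ y, 0 < v) (hy : y ≠ [])
    (hc : 0 < c) (hinv : PAinv (y ++ [c]) x') {w : ℕ} (hwmem : w ∈ x')
    (hwmax : ∀ v ∈ x', v ≤ w) : PAinv y (x'.erase w) := by
  have hPA : PA (y ++ [c]) x' := hinv x' (List.Perm.refl x')
  obtain ⟨hlen, hbounds, _⟩ := hPA
  set m := y.sum with hm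
  have hsum : (y ++ [c]).sum = m + c := by simp [hm]
  have hxz : x'.Perm (w :: x'.erase w) := List.perm_cons_erase hwmem
  intro u hperm
  -- u is an arrangement of x' minus w; x' ~ u ++ [w]
  have hperm2 : x'.Perm (u ++ [w]) := by
    refine hxz.trans ?_
    exact ((hperm.cons w).trans (List.perm_append_singleton w u).symm)
  have hPAfull : PA (y ++ [c]) (u ++ [w]) := hinv (u ++ [w]) hperm2
  obtain ⟨hlen2, hbounds2, hpark2⟩ := hPAfull
  have hulen : u.length = y.length := by
    have h2 : x'.length = u.length + 1 := by
      have := hperm2.length_eq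
      simpa using this
    have h3 : x'.length = y.length + 1 := by simpa using hlen
    omega
  rw [hsum, List.zip_append hulen] at hpark2
  obtain ⟨Ffull, hPTfull⟩ := park_iff_parkTo.mp hpark2
  obtain ⟨G, hPTu, hPTlast⟩ := parkTo_append.mp hPTfull
  -- analyze the last car
  obtain ⟨s, hs, hone⟩ : ∃ s, ParksAt G (m + c) w c s ∧
      ParkTo (m + c) (G ∪ Finset.Ico s (s + c)) [] Ffull := by
    cases hPTlast with
    | cons _ _ _ _ s F hp hrest =>
      simp only [List.zip_cons_cons, List.zip_nil_right] at *
      exact ⟨s, hp, hrest⟩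
  -- cardinality of G
  have huprefpos : ∀ pl ∈ u.zip y, 1 ≤ pl.1 := by
    intro pl hpl
    have h1 : pl.1 ∈ u := (List.of_mem_zip hpl).1
    have h2 : pl.1 ∈ x' := hperm2.symm.subset (List.mem_append_left _ h1)
    exact (hbounds pl.1 h2).1
  have hcardG := parkTo_card hPTu (by simp) huprefpos
  have hGcard : G.card = m := by
    have h := hcardG.2
    rw [List.map_snd_zip (l₁ := u) (l₂ := y) (le_of_eq hulen.symm)] at h
    simpa using h
  -- the gap argument: G lies entirely left of s
  have hGgap : ∀ t ∈ G, ¬ (s ≤ t ∧ t < s + c) := by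
    intro t ht hcon
    exact hs.1.2.2 t (by simp only [Finset.mem_Ico]; omega) ht
  have huprefle : ∀ pl ∈ u.zip y, pl.1 ≤ s := by
    intro pl hpl
    have h1 : pl.1 ∈ u := (List.of_mem_zip hpl).1
    have h2 : pl.1 ∈ x' := hperm2.symm.subset (List.mem_append_left _ h1)
    exact le_trans (hwmax pl.1 h2) hs.1.1
  have hulenpos : ∀ pl ∈ u.zip y, 1 ≤ pl.2 := by
    intro pl hpl
    have h1 : pl.2 ∈ y := (List.of_mem_zip hpl).2
    exact hypos pl.2 h1
  have hGlt : ∀ t ∈ G, t < s := by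
    refine parkTo_gap hPTu hc hGgap huprefle hulenpos ?_
    intro t ht
    exact absurd ht (Finset.notMem_empty t)
  -- deduce s = m + 1 and G = Icc 1 m
  have hsle : s ≤ m + 1 := by
    have := hs.1.2.1; omega
  have hw1 : 1 ≤ w := (hbounds w hwmem).1
  have hGsub : G ⊆ Finset.Icc 1 (s - 1) := by
    intro t ht
    have h1 := hGlt t ht
    have h2 := hcardG.1 ht
    simp only [Finset.mem_Icc] at h2 ⊢
    omega
  have hsm : s = m + 1 := by
    have hcard_le : G.card ≤ s - 1 := by
      calc G.card ≤ (Finset.Icc 1 (s-1)).card := Finset.card_le_card hGsub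
      _ = s - 1 := by rw [Nat.card_Icc]; omega
    have hx1 := hGcard
    have hx2 := hsle
    have hx3 := hw1
    have hx4 := hs.1.1
    omega
  have hGeq : G = Finset.Icc 1 m := by
    apply Finset.eq_of_subset_of_card_le
    · intro t ht
      have := hGsub ht
      simp only [Finset.mem_Icc] at this ⊢
      omega
    · rw [Nat.card_Icc, hGcard]; omega
  -- downgrade the lot
  have hdown : ParkTo m ∅ (u.zip y) G := by
    refine parkTo_lot_down hPTu (by omega) ?_ hulenpos
    intro t ht
    have := hGlt t ht; omega
  -- prefs of u are ≤ m
  have huple : ∀ pl ∈ u.zip y, pl.1 ≤ m := parkTo_pref_le hdown hulenpos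
  refine ⟨hulen, ?_, park_iff_parkTo.mpr ⟨G, hdown⟩⟩
  intro v hv
  have h2 : v ∈ x' := hperm2.symm.subset (List.mem_append_left _ hv)
  refine ⟨(hbounds v h2).1, ?_⟩
  obtain ⟨pl, hpl, hfst⟩ : ∃ pl ∈ u.zip y, pl.1 = v := by
    have hmap : (u.zip y).map Prod.fst = u := List.map_fst_zip (l₁ := u) (l₂ := y) (le_of_eq hulen)
    rw [← hmap] at hv
    obtain ⟨pl, hpl, heq⟩ := List.mem_map.mp hv
    exact ⟨pl, hpl, heq⟩
  rw [← hfst]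
  exact huple pl hpl

lemma deg_replicate (k : ℕ) : deg (List.replicate k 1) = 0 := by
  induction k with
  | zero => simp [deg]
  | succ k ih =>
    simp only [deg, List.replicate_succ, List.filter_cons] at *
    simpa using ih

lemma deg_append_one (x : List ℕ) : deg (x ++ [1]) = deg x := by
  simp [deg, List.filter_append]

lemma deg_cons_ne_one {w : ℕ} (hw : w ≠ 1) (z : List ℕ) : deg (w :: z) = deg z + 1 := by
  simp [deg, List.filter_cons, hw]


/-- if `χ(y) = α` then `χ(y⁺) ∈ {α, α + 1}` for `y⁺ = (y, c)`. -/
theorem stmt13 (n : ℕ) (hn : 0 < n) (y : List ℕ) (hylen : y.length = n)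
    (hypos : ∀ v ∈ y, 0 < v) (c : ℕ) (hc : 0 < c) (α : ℕ) (hchi : chi y = α) :
    chi (y ++ [c]) = α ∨ chi (y ++ [c]) = α + 1 := by
  have hyne : y ≠ [] := by
    intro h; rw [h] at hylen; simp at hylen; omega
  set S : Set ℕ := {d | ∃ x, PAinv y x ∧ deg x = d} with hS
  set T : Set ℕ := {d | ∃ x, PAinv (y ++ [c]) x ∧ deg x = d} with hT
  have hS0 : 0 ∈ S := ⟨List.replicate y.length 1, allones_PAinv y hypos hyne, deg_replicate _⟩
  have hSb : BddAbove S := by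
    refine ⟨n, ?_⟩
    rintro d ⟨x, hx, rfl⟩
    have hPA : PA y x := hx x (List.Perm.refl x)
    calc deg x ≤ x.length := List.length_filter_le _ _
    _ = n := by rw [hPA.1, hylen]
  have hαS : α ∈ S := by
    rw [← hchi]
    exact Nat.sSup_mem ⟨0, hS0⟩ hSb
  obtain ⟨xα, hxαinv, hxαdeg⟩ := hαS
  have hαT : α ∈ T := by
    refine ⟨xα ++ [1], lb_lemma hypos hyne hc hxαinv, ?_⟩
    rw [deg_append_one, hxαdeg]
  have hub : ∀ d ∈ T, d ≤ α + 1 := by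
    rintro d ⟨x', hx', rfl⟩
    by_cases hd0 : deg x' = 0
    · omega
    · have hPA' : PA (y ++ [c]) x' := hx' x' (List.Perm.refl x')
      have hx'ne : x' ≠ [] := by
        intro h0
        rw [h0] at hd0
        simp [deg] at hd0
      have hPne : (↑x' : Multiset ℕ) ≠ 0 := by
        simpa using hx'ne
      obtain ⟨w, hwmem, hwmax⟩ := multiset_exists_max hPne
      rw [Multiset.mem_coe] at hwmem
      have hwmax' : ∀ v ∈ x', v ≤ w := by
        intro v hv; exact hwmax v (by rwa [Multiset.mem_coe])
      -- w ≠ 1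
      have hw1 : w ≠ 1 := by
        have hfilne : x'.filter (fun v => v ≠ 1) ≠ [] := by
          intro h0
          rw [deg, h0] at hd0
          simp at hd0
        obtain ⟨v, hv⟩ := List.exists_mem_of_ne_nil _ hfilne
        have hv2 := List.mem_filter.mp hv
        have hvne : v ≠ 1 := by simpa using hv2.2
        have hv1 : 1 ≤ v := (hPA'.2.1 v hv2.1).1
        have : v ≤ w := hwmax' v hv2.1
        omega
      have hzinv : PAinv y (x'.erase w) := ub_lemma hypos hyne hc hx' hwmem hwmax'
      have hdegz : deg (x'.erase w) = deg x' - 1 := by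
        have hperm : x'.Perm (w :: x'.erase w) := List.perm_cons_erase hwmem
        have := deg_perm hperm
        rw [deg_cons_ne_one hw1] at this
        omega
      have : deg x' - 1 ∈ S := ⟨x'.erase w, hzinv, hdegz⟩
      have hle : deg x' - 1 ≤ α := by
        rw [← hchi]
        exact le_csSup hSb this
      omega
  have hTb : BddAbove T := ⟨α + 1, hub⟩
  have h1 : α ≤ sSup T := le_csSup hTb hαT
  have h2 : sSup T ≤ α + 1 := csSup_le ⟨α, hαT⟩ hub
  have : chi (y ++ [c]) = sSup T := rfl
  omega
end

section
/- Let y = (y_1, ..., y_n) be a vector of n positive integer car lengths and let x = (x_1, ..., x_n) ∈ PA_n(y). If there exists i ∈ [n] such that x_i = min(x_i, x_{i+1}, ..., x_n), then for any r with 1 ≤ r ≤ x_i, the vector (x_1, ..., x_{i−1}, r, x_{i+1}, ..., x_n) obtained by replacing the i-th entry of x with r is also in PA_n(y). In particular, replacing the last entry of any parking assortment by 1 yields a parking assortment. -/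
lemma park_final {m : ℕ} {occ : Finset ℕ} {L : List (ℕ × ℕ)} (p : ℕ)
    (hp : Park m occ L)
    (hL : ∀ pr ∈ L, p ≤ pr.1 ∧ 1 ≤ pr.1)
    (hocc : occ ⊆ Finset.Icc 1 m) :
    ∃ F : Finset ℕ, occ ⊆ F ∧ F ⊆ Finset.Icc 1 m ∧
      F.card = occ.card + (L.map Prod.snd).sum ∧
      ∀ t, t < p → t ∈ F → t ∈ occ := by
  induction hp with
  | nil occ => exact ⟨occ, subset_rfl, hocc, by simp, fun t _ h => h⟩
  | cons occ pref len rest s hps hrest ih =>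
    obtain ⟨⟨hpref, hm, hfree⟩, -⟩ := hps
    have h1 : 1 ≤ pref := (hL _ List.mem_cons_self).2
    have hup : p ≤ pref := (hL _ List.mem_cons_self).1
    have hocc' : occ ∪ Finset.Ico s (s + len) ⊆ Finset.Icc 1 m := by
      intro t ht
      rcases Finset.mem_union.mp ht with h | h
      · exact hocc h
      · have h2 := Finset.mem_Ico.mp h
        exact Finset.mem_Icc.mpr ⟨by omega, by omega⟩
    obtain ⟨F, hsub, hFm, hcard, hlow⟩ :=
      ih (fun pr hpr => hL pr (List.mem_cons_of_mem _ hpr)) hocc'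
    have hdisj : Disjoint occ (Finset.Ico s (s + len)) := by
      rw [Finset.disjoint_right]; exact fun t ht => hfree t ht
    refine ⟨F, (Finset.subset_union_left).trans hsub, hFm, ?_, ?_⟩
    · rw [hcard, Finset.card_union_of_disjoint hdisj, Nat.card_Ico]
      simp
      omega
    · intro t ht htF
      have := hlow t ht htF
      rcases Finset.mem_union.mp this with h | h
      · exact h
      · have h2 := Finset.mem_Ico.mp h
        omega

lemma park_set {m : ℕ} : ∀ (i : ℕ) (L : List (ℕ × ℕ)) (occ : Finset ℕ) (r : ℕ),
    Park m occ L →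
    (∀ pr ∈ L, 1 ≤ pr.1 ∧ 1 ≤ pr.2) →
    occ ⊆ Finset.Icc 1 m →
    occ.card + (L.map Prod.snd).sum = m →
    ∀ (hi : i < L.length),
    (∀ j (hj : j < L.length), i ≤ j → (L[i]'hi).1 ≤ (L[j]'hj).1) →
    1 ≤ r → r ≤ (L[i]'hi).1 →
    Park m occ (L.set i (r, (L[i]'hi).2)) := by
  intro i
  induction i with
  | zero =>
    rintro (_ | ⟨⟨u, l⟩, rest⟩) occ r hp h1 hocc hcard hi hmin hr1 hr2
    · simp at hi
    cases hp with
    | cons _ _ _ _ s hps hrest =>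
      simp only [List.getElem_cons_zero] at hmin hr2 ⊢
      obtain ⟨⟨hpref, hm, hfree⟩, hleast⟩ := hps
      have hl1 : 1 ≤ l := (h1 _ List.mem_cons_self).2
      refine Park.cons _ _ _ _ s ⟨⟨hr2.trans hpref, hm, hfree⟩, ?_⟩ hrest
      intro s'' hlt hfit
      obtain ⟨hrs, hm'', hfree''⟩ := hfit
      by_cases hus : u ≤ s''
      · exact hleast s'' hlt ⟨hus, hm'', hfree''⟩
      · push_neg at hus
        have hLmin : ∀ pr ∈ (u, l) :: rest, u ≤ pr.1 ∧ 1 ≤ pr.1 := by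
          intro pr hpr
          obtain ⟨j, hj, hjeq⟩ := List.mem_iff_getElem.mp hpr
          constructor
          · rw [← hjeq]; exact hmin j hj (Nat.zero_le _)
          · rw [← hjeq]
            exact (h1 _ (by rw [hjeq]; exact hpr)).1
        obtain ⟨F, hsubF, hFm, hcardF, hlow⟩ :=
          park_final u (Park.cons _ _ _ _ s ⟨⟨hpref, hm, hfree⟩, hleast⟩ hrest)
            hLmin hocc
        have hFall : F = Finset.Icc 1 m := by
          apply Finset.eq_of_subset_of_card_le hFm
          rw [hcardF, hcard, Nat.card_Icc]
          omega
        have hs''F : s'' ∈ F := by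
          rw [hFall, Finset.mem_Icc]
          exact ⟨hr1.trans hrs, by omega⟩
        exact hfree'' s'' (Finset.mem_Ico.mpr ⟨le_refl _, by omega⟩) (hlow s'' hus hs''F)
  | succ j ih =>
    rintro (_ | ⟨⟨u, l⟩, rest⟩) occ r hp h1 hocc hcard hi hmin hr1 hr2
    · simp at hi
    cases hp with
    | cons _ _ _ _ s hps hrest =>
      simp only [List.getElem_cons_succ] at hmin hr2 ⊢
      obtain ⟨⟨hpref, hm, hfree⟩, hleast⟩ := hps
      have h1u : 1 ≤ u := (h1 _ List.mem_cons_self).1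
      have hocc' : occ ∪ Finset.Ico s (s + l) ⊆ Finset.Icc 1 m := by
        intro t ht
        rcases Finset.mem_union.mp ht with h | h
        · exact hocc h
        · have h2 := Finset.mem_Ico.mp h
          exact Finset.mem_Icc.mpr ⟨by omega, by omega⟩
      have hdisj : Disjoint occ (Finset.Ico s (s + l)) := by
        rw [Finset.disjoint_right]; exact fun t ht => hfree t ht
      have hcard' : (occ ∪ Finset.Ico s (s + l)).card + (rest.map Prod.snd).sum = m := by
        rw [Finset.card_union_of_disjoint hdisj, Nat.card_Ico]
        simp at hcard
        omega
      have hi' : j < rest.length := by simpa using hi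
      have hrest' := ih rest (occ ∪ Finset.Ico s (s + l)) r hrest
        (fun pr hpr => h1 _ (List.mem_cons_of_mem _ hpr)) hocc' hcard' hi'
        (fun k hk hjk => by
          have := hmin (k + 1) (by simpa using Nat.succ_lt_succ hk) (Nat.succ_le_succ hjk)
          simpa using this)
        hr1 hr2
      exact Park.cons _ _ _ _ s ⟨⟨hpref, hm, hfree⟩, hleast⟩ hrest'

lemma zip_set : ∀ (x y : List ℕ) (i r : ℕ),
    (x.set i r).zip y = (x.zip y).set i (r, y.getD i 0) := by
  intro x
  induction x with
  | nil => intro y i r; simp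
  | cons a x ih =>
    intro y i r
    cases y with
    | nil => simp
    | cons b y =>
      cases i with
      | zero =>
        simp only [List.set, List.zip_cons_cons, List.getD_cons_zero]
      | succ j =>
        simp only [List.set, List.zip_cons_cons, List.getD_cons_succ]
        rw [ih y j r]

lemma stmt14_aux (n : ℕ) (y : List ℕ) (hylen : y.length = n)
    (hypos : ∀ v ∈ y, 0 < v) (x : List ℕ) (hx : PA y x)
    (i : ℕ) (hi : i < n)
    (hmin : ∀ j, i ≤ j → j < n → x.getD i 0 ≤ x.getD j 0)
    (r : ℕ) (hr1 : 1 ≤ r) (hr2 : r ≤ x.getD i 0) : PA y (x.set i r) := by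
  obtain ⟨hlen, hbd, hpark⟩ := hx
  have hxn : x.length = n := by rw [hlen, hylen]
  have hiL : i < (x.zip y).length := by
    rw [List.length_zip, hxn, hylen]; simpa using hi
  have hix : i < x.length := by omega
  have hiy : i < y.length := by omega
  have hfst : ((x.zip y)[i]'hiL).1 = x.getD i 0 := by
    rw [List.getElem_zip, List.getD_eq_getElem x 0 hix]
  have hsnd : ((x.zip y)[i]'hiL).2 = y.getD i 0 := by
    rw [List.getElem_zip, List.getD_eq_getElem y 0 hiy]
  have hximem : x.getD i 0 ∈ x := by
    rw [List.getD_eq_getElem x 0 hix]; exact List.getElem_mem _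
  refine ⟨by rw [List.length_set]; exact hlen, ?_, ?_⟩
  · intro v hv
    rcases List.mem_or_eq_of_mem_set hv with h | h
    · exact hbd v h
    · subst h
      exact ⟨hr1, hr2.trans (hbd _ hximem).2⟩
  · rw [zip_set, ← hsnd]
    have hsum : (List.map Prod.snd (x.zip y)).sum = y.sum := by
      rw [List.map_snd_zip (by omega : y.length ≤ x.length)]
    apply park_set i (x.zip y) ∅ r hpark
    · rintro ⟨a, b⟩ hpr
      obtain ⟨ha, hb⟩ := List.of_mem_zip hpr
      exact ⟨(hbd a ha).1, hypos b hb⟩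
    · simp
    · simp [hsum]
    · intro j hj hij
      have hjx : j < x.length := by rw [List.length_zip] at hj; omega
      rw [hfst, List.getElem_zip, ← List.getD_eq_getElem x 0 hjx]
      exact hmin j hij (by omega)
    · exact hr1
    · rw [hfst]; exact hr2

/-- if `x ∈ PA_n(y)` and `x_i = min(x_i, …, x_n)` (0-based `i` below),
then replacing the `i`-th entry of `x` by any `r` with `1 ≤ r ≤ x_i` again yields a
parking assortment; in particular replacing the last entry by 1 does. -/
theorem stmt14 (n : ℕ) (hn : 0 < n) (y : List ℕ) (hylen : y.length = n)
    (hypos : ∀ v ∈ y, 0 < v) (x : List ℕ) (hx : PA y x)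
    (i : ℕ) (hi : i < n)
    (hmin : ∀ j, i ≤ j → j < n → x.getD i 0 ≤ x.getD j 0) :
    (∀ r, 1 ≤ r → r ≤ x.getD i 0 → PA y (x.set i r)) ∧
      PA y (x.set (n - 1) 1) := by
  constructor
  · intro r h1 h2
    exact stmt14_aux n y hylen hypos x hx i hi hmin r h1 h2
  · have hxn : x.length = n := by rw [hx.1, hylen]
    have hmem : x.getD (n - 1) 0 ∈ x := by
      rw [List.getD_eq_getElem x 0 (by omega)]
      exact List.getElem_mem _
    refine stmt14_aux n y hylen hypos x hx (n - 1) (by omega) ?_ 1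
      (le_refl 1) (hx.2.1 _ hmem).1
    intro j h1 h2
    have : j = n - 1 := by omega
    subst this
    exact le_refl _
end

section
/- Let y = (y_1, ..., y_n) be a vector of n positive integer car lengths that is not constant (not all entries equal). If w ∈ W(y), then w ≤ y_1 + y_2 + ... + y_{n−1}. -/
lemma zip_replicate_ones : ∀ l : List ℕ, (List.replicate l.length 1).zip l = l.map (fun v => (1, v)) := by
  intro l
  induction l with
  | nil => simp
  | cons a t ih => simpa [List.replicate_succ] using ih

lemma parksAt_le {occ : Finset ℕ} {m p len s s' : ℕ}
    (h : ParksAt occ m p len s) (h' : FitsAt occ m p len s') : s ≤ s' := by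
  by_contra hc
  exact h.2 s' (by omega) h'

lemma parks_step {occ : Finset ℕ} {m len a s : ℕ} (hlen : 0 < len)
    (hsub : Finset.Ico 1 (a+1) ⊆ occ)
    (hfit : FitsAt occ m 1 len (a+1))
    (h : ParksAt occ m 1 len s) : s = a + 1 := by
  have h1 := parksAt_le h hfit
  obtain ⟨⟨hp, hm, hfree⟩, hmin⟩ := h
  by_contra hne
  have hs : s < a + 1 := by omega
  have hmem : s ∈ occ := hsub (Finset.mem_Ico.mpr ⟨hp, hs⟩)
  exact hfree s (Finset.mem_Ico.mpr ⟨le_refl s, by omega⟩) hmem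

lemma peel_ones {m : ℕ} : ∀ (l : List ℕ) (rest : List (ℕ × ℕ)) (a : ℕ),
    (∀ v ∈ l, 0 < v) → a + l.sum ≤ m →
    Park m (Finset.Ico 1 (a+1)) ((l.map (fun v => (1, v))) ++ rest) →
    Park m (Finset.Ico 1 (a + l.sum + 1)) rest := by
  intro l
  induction l with
  | nil => intro rest a _ _ h; simpa using h
  | cons v t ih =>
    intro rest a hpos hm h
    have hv : 0 < v := hpos v (by simp)
    have hsum : a + (v + t.sum) ≤ m := by simpa using hm
    rcases h with _ | ⟨_, _, _, _, s, hps, hrest⟩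
    have hfit : FitsAt (Finset.Ico 1 (a+1)) m 1 v (a+1) := by
      refine ⟨by omega, by omega, ?_⟩
      intro t' ht'
      simp only [Finset.mem_Ico] at ht' ⊢
      omega
    have hs := parks_step hv (Finset.Subset.refl _) hfit hps
    subst hs
    have hocc : Finset.Ico 1 (a+1) ∪ Finset.Ico (a+1) (a+1+v) = Finset.Ico 1 (a+v+1) := by
      ext t'
      simp only [Finset.mem_union, Finset.mem_Ico]
      omega
    rw [hocc] at hrest
    have hres := ih rest (a+v) (fun x hx => hpos x (by simp [hx])) (by omega) hrest
    have heq : a + v + t.sum + 1 = a + (v :: t).sum + 1 := by simp [List.sum_cons]; omega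
    rwa [heq] at hres

lemma peel_ones2 {m b c : ℕ} : ∀ (l : List ℕ) (rest : List (ℕ × ℕ)) (a : ℕ),
    (∀ v ∈ l, 0 < v) → a + l.sum < b → b ≤ c → c ≤ m + 1 →
    Park m (Finset.Ico 1 (a+1) ∪ Finset.Ico b c) ((l.map (fun v => (1, v))) ++ rest) →
    Park m (Finset.Ico 1 (a + l.sum + 1) ∪ Finset.Ico b c) rest := by
  intro l
  induction l with
  | nil => intro rest a _ _ _ _ h; simpa using h
  | cons v t ih =>
    intro rest a hpos hm hbc hcm h
    have hv : 0 < v := hpos v (by simp)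
    have hsum : a + (v + t.sum) < b := by simpa using hm
    rcases h with _ | ⟨_, _, _, _, s, hps, hrest⟩
    have hfit : FitsAt (Finset.Ico 1 (a+1) ∪ Finset.Ico b c) m 1 v (a+1) := by
      refine ⟨by omega, by omega, ?_⟩
      intro t' ht'
      simp only [Finset.mem_Ico, Finset.mem_union] at ht' ⊢
      omega
    have hs := parks_step hv Finset.subset_union_left hfit hps
    subst hs
    have hocc : (Finset.Ico 1 (a+1) ∪ Finset.Ico b c) ∪ Finset.Ico (a+1) (a+1+v)
        = Finset.Ico 1 (a+v+1) ∪ Finset.Ico b c := by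
      ext t'
      simp only [Finset.mem_union, Finset.mem_Ico]
      omega
    rw [hocc] at hrest
    have hres := ih rest (a+v) (fun x hx => hpos x (by simp [hx])) (by omega) hbc hcm hrest
    have heq : a + v + t.sum + 1 = a + (v :: t).sum + 1 := by simp [List.sum_cons]; omega
    rwa [heq] at hres

/-- if `y` is not constant and `w ∈ W(y)`, then
`w ≤ y₁ + y₂ + ⋯ + y_{n−1}`. -/
theorem stmt15 (n : ℕ) (hn : 0 < n) (y : List ℕ) (hylen : y.length = n)
    (hypos : ∀ v ∈ y, 0 < v) (hnc : ∃ u ∈ y, ∃ v ∈ y, u ≠ v) :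
    ∀ w ∈ Wset y, w ≤ y.dropLast.sum := by
  intro w hw
  have hy0 : y ≠ [] := by
    rintro rfl
    simp at hnc
  set L := y.dropLast with hL
  set yn := y.getLast hy0 with hyn
  have hysplit : y = L ++ [yn] := (List.dropLast_append_getLast hy0).symm
  set S := L.sum with hS
  set m := y.sum with hmdef
  have hm : m = S + yn := by rw [hmdef, hysplit]; simp; rfl
  have hLlen : L.length = y.length - 1 := by rw [hL, List.length_dropLast]
  have hLpos : ∀ v ∈ L, 0 < v := fun v hv => hypos v (by rw [hysplit]; exact List.mem_append.mpr (Or.inl hv))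
  have hynpos : 0 < yn := hypos yn (by rw [hysplit]; simp)
  have hinv : PAinv y (List.replicate (y.length - 1) 1 ++ [w]) := hw
  -- Step 1: identity order gives w ≤ S + 1
  obtain ⟨-, -, hpark⟩ := hinv _ (List.Perm.refl _)
  have hzip : (List.replicate (y.length - 1) 1 ++ [w]).zip y
      = L.map (fun v => (1, v)) ++ [(w, yn)] := by
    conv_lhs => rw [← hLlen, hysplit]
    rw [List.zip_append (by simp), zip_replicate_ones]
    simp
  rw [hzip] at hpark
  have hpark0 : Park m (Finset.Ico 1 (0 + 1)) (L.map (fun v => (1, v)) ++ [(w, yn)]) := by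
    simpa using hpark
  have hpark1 := peel_ones L [(w, yn)] 0 hLpos (by omega) hpark0
  rw [show (0 : ℕ) + L.sum + 1 = S + 1 by omega] at hpark1
  rcases hpark1 with _ | ⟨_, _, _, _, s, hps, -⟩
  obtain ⟨⟨hws, hsm, -⟩, -⟩ := hps
  have hwS1 : w ≤ S + 1 := by omega
  -- If w ≤ S we are done; otherwise w = S + 1 and we derive a contradiction
  rcases Nat.lt_or_ge S w with hgt | hle
  swap
  · exact hle
  exfalso
  have hwEq : w = S + 1 := by omega
  -- find an entry of L different from yn
  have hsplit : ∃ A e B, L = A ++ e :: B ∧ e ≠ yn := by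
    by_contra hcon
    push_neg at hcon
    have hall : ∀ v ∈ L, v = yn := by
      intro v hv
      obtain ⟨A, B, hAB⟩ := List.append_of_mem hv
      by_contra hne
      exact hne (hcon A v B hAB)
    obtain ⟨u, hu, v, hv, huv⟩ := hnc
    rw [hysplit] at hu hv
    have hu' : u = yn := by
      rcases List.mem_append.mp hu with h | h
      · exact hall u h
      · simpa using h
    have hv' : v = yn := by
      rcases List.mem_append.mp hv with h | h
      · exact hall v h
      · simpa using h
    exact huv (hu'.trans hv'.symm)
  obtain ⟨A, e, B, hAB, hne⟩ := hsplit
  have hepos : 0 < e := hLpos e (by rw [hAB]; simp)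
  have hApos : ∀ v ∈ A, 0 < v := fun v hv => hLpos v (by rw [hAB]; simp [hv])
  have hBpos : ∀ v ∈ B, 0 < v := fun v hv => hLpos v (by rw [hAB]; simp [hv])
  have hSsum : S = A.sum + e + B.sum := by rw [hS, hAB]; simp; omega
  -- the permuted preference vector
  set x' : List ℕ := List.replicate A.length 1 ++ w :: List.replicate (B.length + 1) 1 with hx'
  have hlenL : L.length = A.length + 1 + B.length := by rw [hAB]; simp; omega
  have hperm : (List.replicate (y.length - 1) 1 ++ [w]).Perm x' := by
    have h1 : (List.replicate (y.length - 1) 1 ++ [w]).Perm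
        (w :: List.replicate (y.length - 1) 1) := List.perm_append_singleton w _
    have h2 : x'.Perm (w :: (List.replicate A.length 1 ++ List.replicate (B.length + 1) 1)) :=
      List.perm_middle
    rw [← List.replicate_add, show A.length + (B.length + 1) = y.length - 1 by omega] at h2
    exact h1.trans h2.symm
  obtain ⟨-, -, hpark'⟩ := hinv x' hperm
  have hzip' : x'.zip y
      = A.map (fun v => (1, v)) ++ (w, e) :: (B.map (fun v => (1, v)) ++ [(1, yn)]) := by
    have hy2 : y = A ++ e :: (B ++ [yn]) := by rw [hysplit, hAB]; simp
    conv_lhs => rw [hx', hy2]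
    rw [List.zip_append (by simp)]
    congr 1
    · exact zip_replicate_ones A
    · rw [List.zip_cons_cons]
      congr 1
      have hlen : (B ++ [yn]).length = B.length + 1 := by simp
      rw [← hlen, zip_replicate_ones]
      simp
  rw [hzip'] at hpark'
  have hpark'0 : Park m (Finset.Ico 1 (0 + 1))
      (A.map (fun v => (1, v)) ++ (w, e) :: (B.map (fun v => (1, v)) ++ [(1, yn)])) := by
    simpa using hpark'
  have hpark'1 := peel_ones A _ 0 hApos (by omega) hpark'0
  rw [show (0 : ℕ) + A.sum + 1 = A.sum + 1 by omega] at hpark'1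
  rcases hpark'1 with _ | ⟨_, _, _, _, s₂, hps₂, hrest₂⟩
  -- the car of length e must park at S + 1, and e < yn
  have heyn : e < yn := by
    obtain ⟨⟨hws₂, hs₂m, -⟩, -⟩ := hps₂
    have : e ≤ yn := by omega
    omega
  have hfit₂ : FitsAt (Finset.Ico 1 (A.sum + 1)) m w e (S + 1) := by
    refine ⟨by omega, by omega, ?_⟩
    intro t' ht'
    simp only [Finset.mem_Ico] at ht' ⊢
    omega
  have hs₂eq : s₂ = S + 1 := by
    have h1 := parksAt_le hps₂ hfit₂
    have h2 : w ≤ s₂ := hps₂.1.1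
    omega
  subst hs₂eq
  have hocc₂ : Finset.Ico 1 (A.sum + 1) ∪ Finset.Ico (S + 1) (S + 1 + e)
      = Finset.Ico 1 (A.sum + 1) ∪ Finset.Ico (S + 1) (S + 1 + e) := rfl
  have hpark'2 := peel_ones2 B [(1, yn)] A.sum hBpos (by omega) (by omega) (by omega) hrest₂
  rcases hpark'2 with _ | ⟨_, _, _, _, s₃, hps₃, -⟩
  -- the last car cannot park: contradiction
  obtain ⟨⟨hp₃, hm₃, hfree₃⟩, -⟩ := hps₃
  set a := A.sum + B.sum with ha
  have haS : a + e = S := by omega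
  by_cases hcase : s₃ ≤ a
  · exact hfree₃ s₃ (Finset.mem_Ico.mpr ⟨le_refl _, by omega⟩)
      (Finset.mem_union.mpr (Or.inl (Finset.mem_Ico.mpr ⟨hp₃, by omega⟩)))
  · push_neg at hcase
    have hs₃S : s₃ ≤ S + 1 := by omega
    exact hfree₃ (S + 1) (Finset.mem_Ico.mpr ⟨hs₃S, by omega⟩)
      (Finset.mem_union.mpr (Or.inr (Finset.mem_Ico.mpr ⟨le_refl _, by omega⟩)))
end

section
/- Let y = (y_1, ..., y_n) be a vector of n positive integer car lengths. Then W(y) ⊆ {1 + b·y : b ∈ {0} × {0,1}^{n−1}}, i.e., every w ∈ W(y) can be written as w = 1 + Σ_{j=2}^{n} b_j y_j for some b_2, ..., b_n ∈ {0,1}. Consequently, |W(y)| ≤ 2^{n−1}. -/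
lemma replicate_zip (a : ℕ) : ∀ (ys : List ℕ),
    (List.replicate ys.length a).zip ys = ys.map (fun l => (a, l)) := by
  intro ys
  induction ys with
  | nil => rfl
  | cons b ys ih => simp [List.replicate_succ, ih]

/-- Cars all preferring spot 1 fill greedily; the gap `[p, w)` must end up
exactly filled by some sub-multiset of the lengths. -/
lemma greedy (m w : ℕ) : ∀ (L : List ℕ) (p q : ℕ), (∀ l ∈ L, 0 < l) →
    1 ≤ p → p ≤ w → w < q → q ≤ m + 1 →
    L.sum = (w - p) + (m + 1 - q) →
    Park m (Finset.Ico 1 p ∪ Finset.Ico w q) (L.map (fun l => (1, l))) →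
    ∃ S : List ℕ, S.Sublist L ∧ p + S.sum = w := by
  intro L
  induction L with
  | nil =>
    intro p q _ hp hpw hwq hq hsum _
    refine ⟨[], List.Sublist.refl _, ?_⟩
    simp only [List.sum_nil] at hsum ⊢
    omega
  | cons l L ih =>
    intro p q hpos hp hpw hwq hq hsum hpark
    have hl : 0 < l := hpos l (by simp)
    have hLpos : ∀ x ∈ L, 0 < x := fun x hx => hpos x (by simp [hx])
    simp only [List.map_cons] at hpark
    cases hpark with
    | cons _ _ _ _ s hparks hrest =>
      obtain ⟨⟨hs1, hs2, hs3⟩, hmin⟩ := hparks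
      simp only [List.sum_cons] at hsum
      by_cases hcase : p + l ≤ w
      · -- parks at p, filling part of the gap
        have hnofit : ∀ s' < p, ¬ FitsAt (Finset.Ico 1 p ∪ Finset.Ico w q) m 1 l s' := by
          rintro s' hs' ⟨h1, h2, h3⟩
          exact h3 s' (by simp only [Finset.mem_Ico]; omega)
            (by simp only [Finset.mem_union, Finset.mem_Ico]; omega)
        have hfit : FitsAt (Finset.Ico 1 p ∪ Finset.Ico w q) m 1 l p := by
          refine ⟨hp, by omega, ?_⟩
          intro t ht
          simp only [Finset.mem_Ico] at ht
          simp only [Finset.mem_union, Finset.mem_Ico]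
          omega
        have hsp : s = p := by
          rcases lt_trichotomy s p with h | h | h
          · exact absurd ⟨hs1, hs2, hs3⟩ (hnofit s h)
          · exact h
          · exact absurd hfit (hmin p h)
        subst hsp
        have hocc : (Finset.Ico 1 s ∪ Finset.Ico w q) ∪ Finset.Ico s (s + l)
            = Finset.Ico 1 (s + l) ∪ Finset.Ico w q := by
          ext t
          simp only [Finset.mem_union, Finset.mem_Ico]
          omega
        rw [hocc] at hrest
        obtain ⟨S, hS, hSsum⟩ := ih (s + l) q hLpos (by omega) (by omega) hwq hq
          (by omega) hrest
        exact ⟨l :: S, List.Sublist.cons₂ l hS, by simp only [List.sum_cons]; omega⟩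
      · -- parks at q, extending the occupied block
        have hnofit : ∀ s' < q, ¬ FitsAt (Finset.Ico 1 p ∪ Finset.Ico w q) m 1 l s' := by
          rintro s' hs' ⟨h1, h2, h3⟩
          rcases lt_or_ge s' p with h | h
          · exact h3 s' (by simp only [Finset.mem_Ico]; omega)
              (by simp only [Finset.mem_union, Finset.mem_Ico]; omega)
          · rcases lt_or_ge s' w with h' | h'
            · exact h3 w (by simp only [Finset.mem_Ico]; omega)
                (by simp only [Finset.mem_union, Finset.mem_Ico]; omega)
            · exact h3 s' (by simp only [Finset.mem_Ico]; omega)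
                (by simp only [Finset.mem_union, Finset.mem_Ico]; omega)
        have hqs : q ≤ s := by
          by_contra h
          exact hnofit s (by omega) ⟨hs1, hs2, hs3⟩
        have hql : q + l ≤ m + 1 := by omega
        have hfit : FitsAt (Finset.Ico 1 p ∪ Finset.Ico w q) m 1 l q := by
          refine ⟨by omega, hql, ?_⟩
          intro t ht
          simp only [Finset.mem_Ico] at ht
          simp only [Finset.mem_union, Finset.mem_Ico]
          omega
        have hsq : s = q := by
          rcases lt_or_ge q s with h | h
          · exact absurd hfit (hmin q h)
          · omega
        subst hsq
        have hocc : (Finset.Ico 1 p ∪ Finset.Ico w s) ∪ Finset.Ico s (s + l)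
            = Finset.Ico 1 p ∪ Finset.Ico w (s + l) := by
          ext t
          simp only [Finset.mem_union, Finset.mem_Ico]
          omega
        rw [hocc] at hrest
        obtain ⟨S, hS, hSsum⟩ := ih p (s + l) hLpos hp hpw (by omega) hql
          (by omega) hrest
        exact ⟨S, List.Sublist.cons l hS, hSsum⟩

/-- A sublist sum is a sum over a set of indices. -/
lemma sublist_sum_finset : ∀ {L S : List ℕ}, S.Sublist L →
    ∃ T : Finset ℕ, T ⊆ Finset.range L.length ∧ S.sum = ∑ j ∈ T, L.getD j 0 := by
  intro L S h
  induction h with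
  | slnil => exact ⟨∅, by simp⟩
  | @cons L' S' a h ih =>
    obtain ⟨T, hT, hsum⟩ := ih
    refine ⟨T.image (· + 1), ?_, ?_⟩
    · intro j hj
      simp only [Finset.mem_image] at hj
      obtain ⟨k, hk, rfl⟩ := hj
      have := hT hk
      simp only [Finset.mem_range, List.length_cons] at *
      omega
    · rw [Finset.sum_image (by intro x _ y _ hxy; simp only at hxy; omega)]
      simpa using hsum
  | @cons_cons L' S' a h ih =>
    obtain ⟨T, hT, hsum⟩ := ih
    refine ⟨insert 0 (T.image (· + 1)), ?_, ?_⟩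
    · intro j hj
      simp only [Finset.mem_insert, Finset.mem_image] at hj
      rcases hj with rfl | ⟨k, hk, rfl⟩
      · simp
      · have := hT hk
        simp only [Finset.mem_range, List.length_cons] at *
        omega
    · rw [Finset.sum_insert (by simp), Finset.sum_image (by intro x _ y _ hxy; simp only at hxy; omega)]
      simp only [List.sum_cons, List.getD_cons_zero, List.getD_cons_succ]
      omega

/-- every `w ∈ W(y)` is of the form `1 + Σ_{j ∈ S} y_j` for some set
`S` of indices among `{2, …, n}` (0-based: `S ⊆ Ico 1 n`); hence `|W(y)| ≤ 2^{n−1}`. -/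
theorem stmt16 (n : ℕ) (hn : 0 < n) (y : List ℕ) (hylen : y.length = n)
    (hypos : ∀ v ∈ y, 0 < v) :
    (∀ w ∈ Wset y, ∃ S : Finset ℕ, S ⊆ Finset.Ico 1 n ∧
        w = 1 + ∑ j ∈ S, y.getD j 0) ∧
      Set.ncard (Wset y) ≤ 2 ^ (n - 1) := by
  have key : ∀ w ∈ Wset y, ∃ S : Finset ℕ, S ⊆ Finset.Ico 1 n ∧
      w = 1 + ∑ j ∈ S, y.getD j 0 := by
    intro w hw
    cases y with
    | nil => simp at hylen; omega
    | cons y1 ys =>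
      have hy1 : 0 < y1 := hypos y1 (by simp)
      have hyspos : ∀ v ∈ ys, 0 < v := fun v hv => hypos v (by simp [hv])
      have hlen : ys.length = n - 1 := by
        simp only [List.length_cons] at hylen; omega
      have hPA : PA (y1 :: ys) (w :: List.replicate ((y1 :: ys).length - 1) 1) := by
        have := hw (([w] : List ℕ) ++ List.replicate ((y1 :: ys).length - 1) 1)
          (List.perm_append_comm)
        simpa using this
      obtain ⟨hlenx, hbound, hpark⟩ := hPA
      set m := (y1 :: ys).sum with hm
      have hwb : 1 ≤ w ∧ w ≤ m := hbound w (by simp)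
      have hz : (w :: List.replicate ((y1 :: ys).length - 1) 1).zip (y1 :: ys)
          = (w, y1) :: ys.map (fun l => (1, l)) := by
        have h1 : (y1 :: ys).length - 1 = ys.length := by simp
        rw [h1, List.zip_cons_cons, replicate_zip]
      rw [hz] at hpark
      cases hpark with
      | cons _ _ _ _ s hparks hrest =>
        obtain ⟨⟨hs1, hs2, hs3⟩, hmin⟩ := hparks
        have hfit : FitsAt ∅ m w y1 w := ⟨le_refl w, by omega, by simp⟩
        have hsw : s = w := by
          rcases lt_or_ge w s with h | h
          · exact absurd hfit (hmin w h)
          · omega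
        subst hsw
        have hocc : (∅ : Finset ℕ) ∪ Finset.Ico s (s + y1)
            = Finset.Ico 1 1 ∪ Finset.Ico s (s + y1) := by simp
        rw [hocc] at hrest
        have hmsum : m = y1 + ys.sum := by simp [hm]
        obtain ⟨S, hS, hSsum⟩ := greedy m s ys 1 (s + y1) hyspos le_rfl hwb.1
          (by omega) (by omega) (by omega) hrest
        obtain ⟨T, hT, hTsum⟩ := sublist_sum_finset hS
        refine ⟨T.image (· + 1), ?_, ?_⟩
        · intro j hj
          simp only [Finset.mem_image] at hj
          obtain ⟨k, hk, rfl⟩ := hj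
          have := hT hk
          simp only [Finset.mem_range] at this
          simp only [Finset.mem_Ico]
          omega
        · rw [Finset.sum_image (by intro x _ y _ hxy; simp only at hxy; omega)]
          simp only [List.getD_cons_succ]
          omega
  refine ⟨key, ?_⟩
  have hsub : Wset y ⊆
      ↑((Finset.Ico 1 n).powerset.image (fun S => 1 + ∑ j ∈ S, y.getD j 0)) := by
    intro w hw
    obtain ⟨S, hS, rfl⟩ := key w hw
    simp only [Finset.coe_image, Set.mem_image, Finset.mem_coe, Finset.mem_powerset]
    exact ⟨S, hS, rfl⟩
  calc Set.ncard (Wset y)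
      ≤ Set.ncard ↑((Finset.Ico 1 n).powerset.image (fun S => 1 + ∑ j ∈ S, y.getD j 0)) :=
        Set.ncard_le_ncard hsub (Finset.finite_toSet _)
    _ = ((Finset.Ico 1 n).powerset.image (fun S => 1 + ∑ j ∈ S, y.getD j 0)).card :=
        Set.ncard_coe_finset _
    _ ≤ (Finset.Ico 1 n).powerset.card := Finset.card_image_le
    _ = 2 ^ (n - 1) := by rw [Finset.card_powerset, Nat.card_Ico]
end

section
/- Let y = (y_1, ..., y_n) be a vector of n positive integer car lengths. If |W(y)| = 2^{n−1}, then y_1 ≥ y_2 and y_j > Σ_{i=j+1}^{n} y_i for every j ∈ [n−1] with j ≥ 2. -/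
/-- Greedy run bookkeeping. -/

inductive GRun (w : ℕ) : ℕ → ℕ → List (ℕ × ℕ) → List (ℕ × ℕ) → ℕ → ℕ → Prop
  | nil (p q : ℕ) : GRun w p q [] [] p q
  | gap (p q : ℕ) (c : ℕ × ℕ) (L G : List (ℕ × ℕ)) (p' q' : ℕ) :
      p + c.2 ≤ w → GRun w (p + c.2) q L G p' q' → GRun w p q (c :: L) (c :: G) p' q'
  | back (p q : ℕ) (c : ℕ × ℕ) (L G : List (ℕ × ℕ)) (p' q' : ℕ) :
      w < p + c.2 → GRun w p (q + c.2) L G p' q' → GRun w p q (c :: L) G p' q'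

lemma grun_sum {w p q L G p' q'} (h : GRun w p q L G p' q') :
    p' = p + (G.map Prod.snd).sum ∧ p' + q' = p + q + (L.map Prod.snd).sum := by
  induction h with
  | nil p q => simp
  | gap p q c L G p' q' hc h ih => simp at ih ⊢; omega
  | back p q c L G p' q' hc h ih => simp at ih ⊢; omega

lemma grun_sublist {w p q L G p' q'} (h : GRun w p q L G p' q') : G.Sublist L := by
  induction h with
  | nil => exact List.Sublist.refl _
  | gap p q c L G p' q' hc h ih => exact ih.cons₂ c
  | back p q c L G p' q' hc h ih => exact ih.cons c

lemma grun_split {w} : ∀ (A : List (ℕ × ℕ)) {B G p q pf qf},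
    GRun w p q (A ++ B) G pf qf →
    ∃ GA GB pa qa, GRun w p q A GA pa qa ∧ GRun w pa qa B GB pf qf ∧ G = GA ++ GB := by
  intro A
  induction A with
  | nil =>
    intro B G p q pf qf h
    exact ⟨[], G, p, q, .nil p q, h, rfl⟩
  | cons c A ih =>
    intro B G p q pf qf h
    cases h with
    | gap _ _ _ _ G' _ _ hc h' =>
      obtain ⟨GA, GB, pa, qa, h1, h2, rfl⟩ := ih h'
      exact ⟨c :: GA, GB, pa, qa, .gap _ _ _ _ _ _ _ hc h1, h2, rfl⟩
    | back _ _ _ _ _ _ _ hc h' =>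
      obtain ⟨GA, GB, pa, qa, h1, h2, rfl⟩ := ih h'
      exact ⟨GA, GB, pa, qa, .back _ _ _ _ _ _ _ hc h1, h2, rfl⟩

lemma park_cons_inv {m pref len : ℕ} {occ : Finset ℕ} {rest : List (ℕ × ℕ)}
    (h : Park m occ ((pref, len) :: rest)) :
    ∃ s, ParksAt occ m pref len s ∧ Park m (occ ∪ Finset.Ico s (s + len)) rest := by
  cases h with
  | cons _ _ _ _ s hs hrest => exact ⟨s, hs, hrest⟩

lemma park_to_grun {m w : ℕ} : ∀ (L : List (ℕ × ℕ)), (∀ c ∈ L, 0 < c.2) →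
    ∀ p q, 1 ≤ p → p ≤ w → w < q → q ≤ m + 1 →
    Park m (Finset.Ico 1 p ∪ Finset.Ico w q) (L.map (fun c => (1, c.2))) →
    ∃ G p' q', GRun w p q L G p' q' ∧ p' ≤ w ∧ q' ≤ m + 1 := by
  intro L
  induction L with
  | nil =>
    intro _ p q h1 h2 h3 h4 _
    exact ⟨[], p, q, .nil p q, h2, h4⟩
  | cons c L ih =>
    intro hpos p q h1 h2 h3 h4 hpark
    have hc0 : 0 < c.2 := hpos c (List.mem_cons_self)
    obtain ⟨s, hs, hrest⟩ := park_cons_inv hpark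
    obtain ⟨⟨hs1, hs2, hs3⟩, hmin⟩ := hs
    by_cases hc : p + c.2 ≤ w
    · -- parks at p
      have hfitp : FitsAt (Finset.Ico 1 p ∪ Finset.Ico w q) m 1 c.2 p := by
        refine ⟨h1, by omega, ?_⟩
        intro t ht
        simp only [Finset.mem_Ico, Finset.mem_union] at ht ⊢
        omega
      have hsp : s = p := by
        rcases lt_trichotomy s p with h | h | h
        · exfalso
          apply hs3 s (by simp [Finset.mem_Ico]; omega)
          simp only [Finset.mem_Ico, Finset.mem_union]
          omega
        · exact h
        · exact absurd hfitp (hmin p h)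
      rw [hsp] at hrest
      have hocc : (Finset.Ico 1 p ∪ Finset.Ico w q) ∪ Finset.Ico p (p + c.2)
          = Finset.Ico 1 (p + c.2) ∪ Finset.Ico w q := by
        ext t
        simp only [Finset.mem_union, Finset.mem_Ico]
        omega
      rw [hocc] at hrest
      obtain ⟨G, p', q', hg, hp', hq'⟩ :=
        ih (fun d hd => hpos d (List.mem_cons_of_mem c hd)) (p + c.2) q
          (by omega) hc h3 h4 hrest
      exact ⟨c :: G, p', q', .gap _ _ _ _ _ _ _ hc hg, hp', hq'⟩
    · -- parks at q
      have hnofit : ∀ s' < q, ¬ FitsAt (Finset.Ico 1 p ∪ Finset.Ico w q) m 1 c.2 s' := by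
        intro s' hs' ⟨hf1, hf2, hf3⟩
        by_cases hlt : s' < p
        · exact hf3 s' (by simp [Finset.mem_Ico]; omega)
            (by simp only [Finset.mem_Ico, Finset.mem_union]; omega)
        · by_cases hlt2 : s' < w
          · exact hf3 w (by simp [Finset.mem_Ico]; omega)
              (by simp only [Finset.mem_Ico, Finset.mem_union]; omega)
          · exact hf3 s' (by simp [Finset.mem_Ico]; omega)
              (by simp only [Finset.mem_Ico, Finset.mem_union]; omega)
      have hsq : s = q := by
        rcases lt_trichotomy s q with h | h | h
        · exact absurd ⟨hs1, hs2, hs3⟩ (hnofit s h)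
        · exact h
        · exfalso
          apply hmin q h
          refine ⟨by omega, by omega, ?_⟩
          intro t ht
          simp only [Finset.mem_Ico] at ht
          simp only [Finset.mem_Ico, Finset.mem_union]
          omega
      rw [hsq] at hrest hs2
      have hocc : (Finset.Ico 1 p ∪ Finset.Ico w q) ∪ Finset.Ico q (q + c.2)
          = Finset.Ico 1 p ∪ Finset.Ico w (q + c.2) := by
        ext t
        simp only [Finset.mem_union, Finset.mem_Ico]
        omega
      rw [hocc] at hrest
      obtain ⟨G, p', q', hg, hp', hq'⟩ :=
        ih (fun d hd => hpos d (List.mem_cons_of_mem c hd)) p (q + c.2)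
          h1 h2 (by omega) (by omega) hrest
      exact ⟨G, p', q', .back _ _ _ _ _ _ _ (by omega) hg, hp', hq'⟩

lemma zip_replicate_one : ∀ (l : List ℕ), (List.replicate l.length 1).zip l = l.map (fun v => (1, v))
  | [] => rfl
  | a :: l => by simp [List.replicate_succ, zip_replicate_one l]

lemma list_sum_getD : ∀ (l : List ℕ), l.sum = ∑ i ∈ Finset.range l.length, l.getD i 0
  | [] => by simp
  | a :: l => by
    rw [List.sum_cons, list_sum_getD l, List.length_cons, Finset.sum_range_succ']
    simp [add_comm]

lemma sum_map_range' (g : ℕ → ℕ) : ∀ (k a : ℕ),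
    ((List.range' a k).map g).sum = ∑ i ∈ Finset.range k, g (a + i)
  | 0, a => by simp
  | k + 1, a => by
    rw [List.range'_succ, List.map_cons, List.sum_cons, sum_map_range' g k (a + 1),
      Finset.sum_range_succ']
    simp [add_comm, add_assoc, add_left_comm]

lemma tail_enum (y₀ : ℕ) (ys : List ℕ) :
    ys = (List.range' 1 ys.length).map (fun k => (y₀ :: ys).getD k 0) := by
  apply List.ext_getElem
  · simp
  · intro i h1 h2
    simp only [List.getElem_map, List.getElem_range']
    have : 1 + 1 * i = i + 1 := by omega
    rw [this, List.getD_cons_succ, List.getD_eq_getElem _ _ h1]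

lemma enum_pos {n : ℕ} {y : List ℕ} (hylen : y.length = n) (hypos : ∀ v ∈ y, 0 < v) :
    ∀ c ∈ (List.range' 1 (n - 1)).map (fun k => (k, y.getD k 0)), 0 < c.2 := by
  intro c hc
  obtain ⟨k, hk, rfl⟩ := List.mem_map.1 hc
  rw [List.mem_range'_1] at hk
  have hkn : k < y.length := by omega
  rw [List.getD_eq_getElem _ _ hkn]
  exact hypos _ (List.getElem_mem hkn)

lemma main_run {n : ℕ} {y : List ℕ} (hylen : y.length = n) (hn : 0 < n)
    (hypos : ∀ v ∈ y, 0 < v) {w : ℕ} (hw : w ∈ Wset y) :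
    ∃ G, GRun w 1 (w + y.getD 0 0)
        ((List.range' 1 (n - 1)).map (fun k => (k, y.getD k 0))) G w (y.sum + 1) ∧
      (G.map Prod.snd).sum + 1 = w := by
  obtain ⟨y₀, ys, rfl⟩ : ∃ a l, y = a :: l := by
    cases y with
    | nil => simp at hylen; omega
    | cons a l => exact ⟨a, l, rfl⟩
  have hlen' : ys.length = n - 1 := by simp at hylen; omega
  have hy0 : 0 < y₀ := hypos y₀ (List.mem_cons_self)
  obtain ⟨-, hbnd, hpark⟩ : PA (y₀ :: ys) (w :: List.replicate (n - 1) 1) :=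
    hw (w :: List.replicate (n - 1) 1) (by
      have h9 : (y₀ :: ys).length - 1 = n - 1 := by simp [hylen]
      rw [Wset, Set.mem_setOf_eq] at hw
      exact h9 ▸ List.perm_append_singleton w _)
  have hw1 : 1 ≤ w := (hbnd w (List.mem_cons_self)).1
  set L := (List.range' 1 (n - 1)).map (fun k => (k, (y₀ :: ys).getD k 0)) with hL
  have hzip : (w :: List.replicate (n - 1) 1).zip (y₀ :: ys)
      = (w, y₀) :: L.map (fun c => (1, c.2)) := by
    rw [List.zip_cons_cons, ← hlen', zip_replicate_one]
    congr 1
    conv_lhs => rw [tail_enum y₀ ys]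
    rw [hL, List.map_map, List.map_map, hlen']
    rfl
  rw [hzip] at hpark
  obtain ⟨s, ⟨⟨hs1, hs2, hs3⟩, hmin⟩, hrest⟩ := park_cons_inv hpark
  have hsw : s = w := by
    rcases lt_trichotomy s w with h | h | h
    · omega
    · exact h
    · exact absurd ⟨le_refl w, by omega, by simp⟩ (hmin w h)
  rw [hsw] at hrest hs2
  have hocc : (∅ : Finset ℕ) ∪ Finset.Ico w (w + y₀)
      = Finset.Ico 1 1 ∪ Finset.Ico w (w + y₀) := by simp
  rw [hocc] at hrest
  obtain ⟨G, p', q', hg, hp', hq'⟩ :=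
    park_to_grun L (enum_pos hylen hypos) 1 (w + y₀) le_rfl hw1 (by omega) hs2 hrest
  obtain ⟨e1, e2⟩ := grun_sum hg
  have hsumL : (L.map Prod.snd).sum = ∑ i ∈ Finset.range (n - 1), (y₀ :: ys).getD (1 + i) 0 := by
    rw [hL, List.map_map]
    exact sum_map_range' _ (n - 1) 1
  have hm : (y₀ :: ys).sum = y₀ + ∑ i ∈ Finset.range (n - 1), (y₀ :: ys).getD (1 + i) 0 := by
    rw [List.sum_cons, list_sum_getD ys, hlen']
    congr 1
    refine Finset.sum_congr rfl fun i _ => ?_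
    rw [add_comm 1 i, List.getD_cons_succ]
  rw [hsumL] at e2
  have hp'w : p' = w := by omega
  have hq'm : q' = (y₀ :: ys).sum + 1 := by omega
  subst hp'w hq'm
  exact ⟨G, hg, by omega⟩

lemma gset {n : ℕ} {y : List ℕ} {G : List (ℕ × ℕ)}
    (hsub : G.Sublist ((List.range' 1 (n - 1)).map (fun k => (k, y.getD k 0)))) :
    ∃ S : Finset ℕ, S ⊆ Finset.Ico 1 n ∧ (∑ i ∈ S, y.getD i 0) = (G.map Prod.snd).sum ∧
      ∀ i, i ∈ S ↔ i ∈ G.map Prod.fst := by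
  have hfst : (G.map Prod.fst).Sublist (List.range' 1 (n - 1)) := by
    have h := hsub.map Prod.fst
    rw [List.map_map] at h
    have heq : List.map (Prod.fst ∘ fun k => (k, y.getD k 0)) (List.range' 1 (n - 1))
        = List.range' 1 (n - 1) := by simp [Function.comp_def]
    rwa [heq] at h
  have hnd : (G.map Prod.fst).Nodup := by
    have := List.nodup_range' (s := 1) (n := n - 1) (step := 1)
    exact List.Nodup.sublist hfst this
  refine ⟨(G.map Prod.fst).toFinset, ?_, ?_, fun i => List.mem_toFinset⟩
  · intro i hi
    have := hfst.subset (List.mem_toFinset.1 hi)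
    rw [List.mem_range'_1] at this
    simp only [Finset.mem_Ico]
    omega
  · rw [List.sum_toFinset _ hnd, List.map_map]
    refine congrArg List.sum (List.map_congr_left ?_)
    intro c hc
    obtain ⟨k, _, rfl⟩ := List.mem_map.1 (hsub.subset hc)
    rfl

lemma sum_split {n : ℕ} {y : List ℕ} (hylen : y.length = n) (hn : 0 < n) :
    y.sum = y.getD 0 0 + ∑ i ∈ Finset.Ico 1 n, y.getD i 0 := by
  obtain ⟨y₀, ys, rfl⟩ : ∃ a l, y = a :: l := by
    cases y with
    | nil => simp at hylen; omega
    | cons a l => exact ⟨a, l, rfl⟩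
  have hlen' : ys.length = n - 1 := by simp at hylen; omega
  rw [Finset.sum_Ico_eq_sum_range, List.sum_cons, list_sum_getD ys, hlen']
  simp only [List.getD_cons_zero]
  congr 1
  refine Finset.sum_congr rfl fun i _ => ?_
  rw [add_comm 1 i, List.getD_cons_succ]

/-- if `|W(y)| = 2^{n−1}` then `y₁ ≥ y₂` and `y_j > Σ_{i>j} y_i`
for every `j ∈ [n−1]` with `j ≥ 2` (0-based: `1 ≤ j < n − 1`). -/
theorem stmt18 (n : ℕ) (hn : 0 < n) (y : List ℕ) (hylen : y.length = n)
    (hypos : ∀ v ∈ y, 0 < v) (hW : Set.ncard (Wset y) = 2 ^ (n - 1)) :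
    y.getD 1 0 ≤ y.getD 0 0 ∧
      ∀ j, 1 ≤ j → j < n - 1 →
        (∑ i ∈ Finset.Ico (j + 1) n, y.getD i 0) < y.getD j 0 := by
  set f : Finset ℕ → ℕ := fun S => 1 + ∑ i ∈ S, y.getD i 0 with hf
  set I : Finset ℕ := (Finset.Ico 1 n).powerset.image f with hI
  -- coverage
  have hcov : Wset y ⊆ ↑I := by
    intro w hw
    obtain ⟨G, hg, hsum⟩ := main_run hylen hn hypos hw
    obtain ⟨S, hS1, hS2, _⟩ := gset (grun_sublist hg)
    refine Finset.mem_coe.2 (Finset.mem_image.2 ⟨S, Finset.mem_powerset.2 hS1, ?_⟩)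
    show 1 + ∑ i ∈ S, y.getD i 0 = w
    omega
  have hpowcard : (Finset.Ico 1 n).powerset.card = 2 ^ (n - 1) := by
    rw [Finset.card_powerset, Nat.card_Ico]
  have hIle : I.card ≤ 2 ^ (n - 1) := hpowcard ▸ Finset.card_image_le
  have hIge : 2 ^ (n - 1) ≤ I.card := by
    rw [← hW, ← Set.ncard_coe_finset I]
    exact Set.ncard_le_ncard hcov (Finset.finite_toSet I)
  have hinj : Set.InjOn f ((Finset.Ico 1 n).powerset : Finset (Finset ℕ)) :=
    Finset.card_image_iff.1 (by rw [← hI, hpowcard]; omega)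
  have hWeq : Wset y = ↑I :=
    Set.eq_of_subset_of_ncard_le hcov
      (by rw [Set.ncard_coe_finset]; omega) (Finset.finite_toSet I)
  have hmem : ∀ S : Finset ℕ, S ⊆ Finset.Ico 1 n → f S ∈ Wset y := by
    intro S hS
    rw [hWeq]
    exact Finset.mem_coe.2 (Finset.mem_image.2 ⟨S, Finset.mem_powerset.2 hS, rfl⟩)
  have hmsplit := sum_split hylen hn
  constructor
  · -- part (a)
    rcases Nat.lt_or_ge n 2 with h2 | h2
    · have : y.length ≤ 1 := by omega
      rw [List.getD_eq_default _ _ this]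
      exact Nat.zero_le _
    · have hwst := hmem (Finset.Ico 1 n) le_rfl
      obtain ⟨y₀, y₁, ys, rfl⟩ : ∃ a b l, y = a :: b :: l := by
        cases y with
        | nil => simp at hylen; omega
        | cons a l =>
          cases l with
          | nil => simp at hylen; omega
          | cons b l => exact ⟨a, b, l, rfl⟩
      obtain ⟨-, -, hpark⟩ : PA (y₀ :: y₁ :: ys)
          (1 :: f (Finset.Ico 1 n) :: List.replicate (n - 2) 1) := by
        apply hwst
        have h9 : (y₀ :: y₁ :: ys).length - 1 = n - 1 := by simp at hylen ⊢; omega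
        rw [h9]
        have h8 : n - 1 = (n - 2) + 1 := by omega
        rw [h8, List.replicate_succ, List.cons_append]
        exact (List.perm_append_singleton _ _).cons 1
      rw [List.zip_cons_cons, List.zip_cons_cons] at hpark
      obtain ⟨s₁, -, hrest⟩ := park_cons_inv hpark
      obtain ⟨s₂, ⟨⟨ha1, ha2, -⟩, -⟩, -⟩ := park_cons_inv hrest
      have hfv : f (Finset.Ico 1 n) = 1 + ∑ i ∈ Finset.Ico 1 n, (y₀ :: y₁ :: ys).getD i 0 := rfl
      simp only [List.getD_cons_zero, List.getD_cons_succ] at hmsplit ⊢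
      omega
  · -- part (b)
    intro j hj1 hj2
    by_contra hcon
    push_neg at hcon
    set T : ℕ := ∑ i ∈ Finset.Ico (j + 1) n, y.getD i 0 with hT
    have hsub : Finset.Ico (j + 1) n ⊆ Finset.Ico 1 n :=
      Finset.Ico_subset_Ico (by omega) le_rfl
    have hwT := hmem (Finset.Ico (j + 1) n) hsub
    obtain ⟨G, hg, hsum⟩ := main_run hylen hn hypos hwT
    obtain ⟨S, hS1, hS2, hS3⟩ := gset (grun_sublist hg)
    have hSeq : S = Finset.Ico (j + 1) n := by
      apply hinj (Finset.mem_coe.2 (Finset.mem_powerset.2 hS1))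
        (Finset.mem_coe.2 (Finset.mem_powerset.2 hsub))
      have hfv2 : f (Finset.Ico (j + 1) n) = 1 + T := rfl
      show 1 + ∑ i ∈ S, y.getD i 0 = f (Finset.Ico (j + 1) n)
      omega
    -- split L at position of j
    have hrange : List.range' 1 (n - 1) = List.range' 1 (j - 1) ++ j :: List.range' (j + 1) (n - j - 1) := by
      have h1 : List.range' 1 (j - 1) ++ List.range' j (n - j) = List.range' 1 (n - 1) := by
        have := List.range'_append (s := 1) (m := j - 1) (n := n - j) (step := 1)
        simp only [one_mul] at this
        rw [show 1 + (j - 1) = j by omega] at this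
        rw [show j - 1 + (n - j) = n - 1 by omega] at this
        exact this
      rw [← h1]
      congr 1
      have h3 : n - j = (n - j - 1) + 1 := by omega
      conv_lhs => rw [h3]
      rw [List.range'_succ]
    rw [hrange, List.map_append, List.map_cons] at hg
    obtain ⟨GA, GC, pa, qa, run1, run2, hGeq⟩ := grun_split _ hg
    have hyjT : y.getD j 0 ≤ T := hcon
    cases run2 with
    | gap _ _ _ _ G'' _ _ hc h' =>
      have hjS : j ∈ S := by
        rw [hS3]
        exact List.mem_map.2 ⟨(j, y.getD j 0), by rw [hGeq]; simp, rfl⟩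
      rw [hSeq] at hjS
      simp [Finset.mem_Ico] at hjS
    | back _ _ _ _ _ _ _ hlt h' =>
      obtain ⟨e1, -⟩ := grun_sum run1
      simp only at hlt
      have hfv2 : f (Finset.Ico (j + 1) n) = 1 + T := rfl
      have hGA : (GA.map Prod.snd).sum > 0 := by omega
      obtain ⟨d, GA', rfl⟩ : ∃ d GA', GA = d :: GA' := by
        cases GA with
        | nil => simp at hGA
        | cons d GA' => exact ⟨d, GA', rfl⟩
      have hdA : d ∈ (List.range' 1 (j - 1)).map (fun k => (k, y.getD k 0)) :=
        (grun_sublist run1).subset (List.mem_cons_self)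
      obtain ⟨k, hk, rfl⟩ := List.mem_map.1 hdA
      rw [List.mem_range'_1] at hk
      have hdS : k ∈ S := by
        rw [hS3]
        exact List.mem_map.2 ⟨(k, y.getD k 0), by rw [hGeq]; simp, rfl⟩
      rw [hSeq] at hdS
      simp only [Finset.mem_Ico] at hdS
      omega
end
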